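/- arXiv:0807.3321 — 5 statements merged into one kernel-verified Lean document; each statement's English description precedes it below -/
import Mathlib

section
/- The set ℰ = { Σ_{i=4}^∞ ε_i α^i : (ε_i)_{i≥4} ∈ 𝒟^∞ } is a compact and connected subset of ℝ × ℂ. -/
open MeasureTheory

noncomputable section

/-- `IsExpansion l ε` : `ε` encodes a sequence `(ε_i)_{i ≥ l}` of 0's and 1's containing
no four consecutive 1's (an element of `𝒟^∞`), extended by `0` for `i < l`. -/
def IsExpansion (l : ℤ) (ε : ℤ → ℕ) : Prop :=
  (∀ i, ε i ≤ 1) ∧ (∀ i, i < l → ε i = 0) ∧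
  (∀ i : ℤ, ¬ (ε i = 1 ∧ ε (i + 1) = 1 ∧ ε (i + 2) = 1 ∧ ε (i + 3) = 1))

/-- `ExpSum α ε z` : `z = Σ_{i=l}^∞ ε_i α^i` (the terms with `i < l` vanish). -/
def ExpSum (α : ℝ × ℂ) (ε : ℤ → ℕ) (z : ℝ × ℂ) : Prop :=
  HasSum (fun i : ℤ => (ε i : ℝ × ℂ) * α ^ i) z

/-- The Rauzy fractal `ℰ = { Σ_{i=4}^∞ ε_i α^i : (ε_i)_{i≥4} ∈ 𝒟^∞ }`. -/
def RauzyE (α : ℝ × ℂ) : Set (ℝ × ℂ) :=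
  { z | ∃ ε : ℤ → ℕ, IsExpansion 4 ε ∧ ExpSum α ε z }


namespace RauzyAux

/-- no four consecutive ones -/
def NoFour (δ : ℕ → ℕ) : Prop :=
  ∀ j, ¬ (δ j = 1 ∧ δ (j+1) = 1 ∧ δ (j+2) = 1 ∧ δ (j+3) = 1)

/-- admissible word of length `n` -/
def Adm (n : ℕ) (δ : ℕ → ℕ) : Prop :=
  (∀ i, δ i ≤ 1) ∧ (∀ i, n ≤ i → δ i = 0) ∧ NoFour δ

def pval (α : ℝ × ℂ) (δ : ℕ → ℕ) (n : ℕ) : ℝ × ℂ :=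
  ∑ i ∈ Finset.range n, (δ i : ℝ × ℂ) * α ^ (i+4)

def Rr (r : ℝ) (n : ℕ) : ℝ := r ^ (n+4) / (1-r)

def SS (α : ℝ × ℂ) (r : ℝ) (ε : ℕ → ℕ) (k n : ℕ) : Set (ℝ × ℂ) :=
  ⋃ δ ∈ {δ : ℕ → ℕ | Adm n δ ∧ ∀ i < k, δ i = ε i},
    Metric.closedBall (pval α δ n) (Rr r n)

def KK (α : ℝ × ℂ) (r : ℝ) (n : ℕ) : Set (ℝ × ℂ) := SS α r (fun _ => 0) 0 n

/-- the digit sequence of the double-point identity `1 = -α² + α⁴ - α⁵ + α⁶ - ⋯` -/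
def dInt (j : ℕ) : ℤ :=
  if 4 ≤ j ∧ j % 2 = 0 then 1 else if j = 2 ∨ (5 ≤ j ∧ j % 2 = 1) then -1 else 0

lemma mem_SS {α : ℝ × ℂ} {r : ℝ} {ε : ℕ → ℕ} {k n : ℕ} {z : ℝ × ℂ} :
    z ∈ SS α r ε k n ↔ ∃ δ : ℕ → ℕ, (Adm n δ ∧ ∀ i < k, δ i = ε i) ∧
      z ∈ Metric.closedBall (pval α δ n) (Rr r n) := by
  simp [SS]

section Main

variable {α : ℝ × ℂ} {r : ℝ}

lemma Rr_nonneg (hr0 : 0 ≤ r) (hr1 : r < 1) (n : ℕ) : 0 ≤ Rr r n :=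
  div_nonneg (pow_nonneg hr0 _) (by linarith)

lemma term_norm_le (hnorm : ∀ m : ℕ, ‖α ^ m‖ ≤ r ^ m) {c : ℕ} (hc : c ≤ 1) (m : ℕ) (hr0 : 0 ≤ r) :
    ‖(c : ℝ × ℂ) * α ^ m‖ ≤ r ^ m := by
  interval_cases c
  · simpa using pow_nonneg hr0 m
  · simpa using hnorm m

lemma pval_split (α : ℝ × ℂ) (δ : ℕ → ℕ) (k M : ℕ) :
    pval α δ (k+1+M) = pval α δ k + (δ k : ℝ × ℂ) * α ^ (k+4)
      + ∑ j ∈ Finset.range M, (δ (k+1+j) : ℝ × ℂ) * α ^ ((k+1+j)+4) := by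
  induction M with
  | zero => simp [pval, Finset.sum_range_succ]
  | succ M ih =>
      rw [show k+1+(M+1) = (k+1+M)+1 by ring]
      rw [pval, Finset.sum_range_succ, ← pval, ih, Finset.sum_range_succ]
      ring

lemma pval_congr (α : ℝ × ℂ) {δ δ' : ℕ → ℕ} (n : ℕ) (h : ∀ i < n, δ i = δ' i) :
    pval α δ n = pval α δ' n := by
  unfold pval
  exact Finset.sum_congr rfl fun i hi => by rw [h i (Finset.mem_range.1 hi)]

/-- the key algebraic identity: `(1 - ∑_{j≤M} d_j α^j)(1+α) = (-1)^{M+1} α^{M+1}` for `M ≥ 3`. -/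
lemma key_identity (hid : α^4 = α^3 + α^2 + α + 1) :
    ∀ M, 3 ≤ M →
      (1 - ∑ j ∈ Finset.range (M+1), (dInt j : ℝ × ℂ) * α ^ j) * (1+α)
        = (-1 : ℝ × ℂ) ^ (M+1) * α ^ (M+1) := by
  intro M hM
  induction M, hM using Nat.le_induction with
  | base =>
      have h0 : (dInt 0 : ℝ × ℂ) = 0 := by norm_num [dInt]
      have h1 : (dInt 1 : ℝ × ℂ) = 0 := by norm_num [dInt]
      have h2 : (dInt 2 : ℝ × ℂ) = -1 := by norm_num [dInt]
      have h3 : (dInt 3 : ℝ × ℂ) = 0 := by norm_num [dInt]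
      simp only [Finset.sum_range_succ, Finset.sum_range_zero, h0, h1, h2, h3]
      norm_num
      linear_combination -hid
  | succ M hM ih =>
      rw [Finset.sum_range_succ]
      rcases Nat.even_or_odd (M+1) with he | ho
      · have hd : (dInt (M+1) : ℝ × ℂ) = 1 := by
          have : 4 ≤ M+1 ∧ (M+1) % 2 = 0 := by
            obtain ⟨t, ht⟩ := he; omega
          simp only [dInt]
          rw [if_pos this]; norm_num
        have hsgn : (-1 : ℝ × ℂ) ^ (M+1) = 1 := he.neg_one_pow
        have hsgn2 : (-1 : ℝ × ℂ) ^ (M+1+1) = -1 := by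
          rw [pow_succ, hsgn]; ring
        rw [hd, hsgn2]
        rw [hsgn] at ih
        rw [pow_succ α (M+1)]
        linear_combination ih
      · have hd : (dInt (M+1) : ℝ × ℂ) = -1 := by
          have h5 : ¬ (4 ≤ M+1 ∧ (M+1) % 2 = 0) := by
            obtain ⟨t, ht⟩ := ho; omega
          have h6 : M+1 = 2 ∨ (5 ≤ M+1 ∧ (M+1) % 2 = 1) := by
            obtain ⟨t, ht⟩ := ho; omega
          simp only [dInt]
          rw [if_neg h5, if_pos h6]; norm_num
        have hsgn : (-1 : ℝ × ℂ) ^ (M+1) = -1 := ho.neg_one_pow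
        have hsgn2 : (-1 : ℝ × ℂ) ^ (M+1+1) = 1 := by
          rw [pow_succ, hsgn]; ring
        rw [hd, hsgn2]
        rw [hsgn] at ih
        rw [pow_succ α (M+1)]
        linear_combination ih

end Main

end RauzyAux

namespace RauzyAux

/-- pattern word on the `0`-branch: `ε` below `k`, `0` at `k`, then ones at even offsets `≥ 4`. -/
def pat0 (ε : ℕ → ℕ) (k n : ℕ) : ℕ → ℕ := fun i =>
  if i < k then ε i else if k < i ∧ i < n ∧ 4 ≤ i - k ∧ (i - k) % 2 = 0 then 1 else 0

/-- pattern word on the `1`-branch: `ε` below `k`, `1` at `k`, then ones at offsets `2,5,7,9,…`. -/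
def pat1 (ε : ℕ → ℕ) (k n : ℕ) : ℕ → ℕ := fun i =>
  if i < k then ε i else if i = k then 1
  else if k < i ∧ i < n ∧ (i - k = 2 ∨ (5 ≤ i - k ∧ (i - k) % 2 = 1)) then 1 else 0

lemma pat0_ones {ε : ℕ → ℕ} {k n i : ℕ} (h : pat0 ε k n i = 1) :
    (i < k ∧ ε i = 1) ∨ (k < i ∧ i < n ∧ 4 ≤ i - k ∧ (i - k) % 2 = 0) := by
  unfold pat0 at h
  split_ifs at h with h1 h2
  · exact Or.inl ⟨h1, h⟩
  · exact Or.inr h2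

lemma pat1_ones {ε : ℕ → ℕ} {k n i : ℕ} (h : pat1 ε k n i = 1) :
    (i < k ∧ ε i = 1) ∨ i = k ∨
      (k < i ∧ i < n ∧ (i - k = 2 ∨ (5 ≤ i - k ∧ (i - k) % 2 = 1))) := by
  unfold pat1 at h
  split_ifs at h with h1 h2 h3
  · exact Or.inl ⟨h1, h⟩
  · exact Or.inr (Or.inl h2)
  · exact Or.inr (Or.inr h3)

lemma pat0_noFour {ε : ℕ → ℕ} (k n : ℕ) (hε : NoFour ε) : NoFour (pat0 ε k n) := by
  intro j h
  obtain ⟨a0, a1, a2, a3⟩ := h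
  rcases pat0_ones a0 with ⟨hk0, he0⟩ | h0 <;>
  rcases pat0_ones a1 with ⟨hk1, he1⟩ | h1 <;>
  rcases pat0_ones a2 with ⟨hk2, he2⟩ | h2 <;>
  rcases pat0_ones a3 with ⟨hk3, he3⟩ | h3 <;>
    first
      | exact hε j ⟨he0, he1, he2, he3⟩
      | omega

lemma pat1_noFour {ε : ℕ → ℕ} (k n : ℕ) (hε : NoFour ε)
    (hA : ¬ ∃ j, j + 3 = k ∧ ε j = 1 ∧ ε (j+1) = 1 ∧ ε (j+2) = 1) :
    NoFour (pat1 ε k n) := by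
  intro j h
  obtain ⟨a0, a1, a2, a3⟩ := h
  rcases pat1_ones a0 with ⟨hk0, he0⟩ | h0 | h0 <;>
  rcases pat1_ones a1 with ⟨hk1, he1⟩ | h1 | h1 <;>
  rcases pat1_ones a2 with ⟨hk2, he2⟩ | h2 | h2 <;>
  rcases pat1_ones a3 with ⟨hk3, he3⟩ | h3 | h3 <;>
    first
      | exact hε j ⟨he0, he1, he2, he3⟩
      | exact hA ⟨j, by omega, he0, he1, he2⟩
      | omega

lemma pat_sub (ε : ℕ → ℕ) (k M j : ℕ) (hj : j < M) :
    ((pat1 ε k (k+1+M) (k+1+j) : ℕ) : ℝ × ℂ) - ((pat0 ε k (k+1+M) (k+1+j) : ℕ) : ℝ × ℂ)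
      = - ((dInt (j+1) : ℤ) : ℝ × ℂ) := by
  have h1 : ¬ (k+1+j < k) := by omega
  have h2 : ¬ (k+1+j = k) := by omega
  have h3 : (k+1+j) - k = j+1 := by omega
  simp only [pat0, pat1, dInt, if_neg h1, if_neg h2, h3]
  push_cast
  split_ifs <;> first | (exfalso; omega) | norm_num

lemma centers_diff (α : ℝ × ℂ) (ε : ℕ → ℕ) (k M : ℕ) :
    pval α (pat1 ε k (k+1+M)) (k+1+M) - pval α (pat0 ε k (k+1+M)) (k+1+M)
      = α ^ (k+4) * (1 - ∑ j ∈ Finset.range M, ((dInt (j+1) : ℤ) : ℝ × ℂ) * α ^ (j+1)) := by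
  rw [pval_split, pval_split]
  have hpre : pval α (pat1 ε k (k+1+M)) k = pval α (pat0 ε k (k+1+M)) k :=
    pval_congr α k (fun i hi => by simp only [pat0, pat1, if_pos hi])
  have h1k : ((pat1 ε k (k+1+M) k : ℕ) : ℝ × ℂ) = 1 := by
    simp [pat1]
  have h0k : ((pat0 ε k (k+1+M) k : ℕ) : ℝ × ℂ) = 0 := by
    simp [pat0]
  have hterm : ∀ j ∈ Finset.range M,
      ((pat1 ε k (k+1+M) (k+1+j) : ℕ) : ℝ × ℂ) * α ^ ((k+1+j)+4)
        = ((pat0 ε k (k+1+M) (k+1+j) : ℕ) : ℝ × ℂ) * α ^ ((k+1+j)+4)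
          - ((dInt (j+1) : ℤ) : ℝ × ℂ) * α ^ (j+1) * α ^ (k+4) := by
    intro j hj
    have hs := pat_sub ε k M j (Finset.mem_range.1 hj)
    have hp : α ^ ((k+1+j)+4) = α ^ (j+1) * α ^ (k+4) := by
      rw [← pow_add]
      congr 1
      omega
    rw [hp]
    linear_combination (α ^ (j+1) * α ^ (k+4)) * hs
  rw [Finset.sum_congr rfl hterm, Finset.sum_sub_distrib, hpre, h1k, h0k, ← Finset.sum_mul]
  ring

end RauzyAux

namespace RauzyAux

lemma pat0_adm {ε : ℕ → ℕ} {k : ℕ} (hε : Adm k ε) (M : ℕ) :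
    Adm (k+1+M) (pat0 ε k (k+1+M)) := by
  refine ⟨fun i => ?_, fun i hi => ?_, pat0_noFour k (k+1+M) hε.2.2⟩
  · unfold pat0; split_ifs with h1 h2
    · exact hε.1 i
    · exact le_rfl
    · exact Nat.zero_le 1
  · unfold pat0
    rw [if_neg (by omega), if_neg (by omega)]

lemma pat1_adm {ε : ℕ → ℕ} {k : ℕ} (hε : Adm k ε) (M : ℕ)
    (hA : ¬ ∃ j, j + 3 = k ∧ ε j = 1 ∧ ε (j+1) = 1 ∧ ε (j+2) = 1) :
    Adm (k+1+M) (pat1 ε k (k+1+M)) := by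
  refine ⟨fun i => ?_, fun i hi => ?_, pat1_noFour k (k+1+M) hε.2.2 hA⟩
  · unfold pat1; split_ifs with h1 h2 h3
    · exact hε.1 i
    · exact le_rfl
    · exact le_rfl
    · exact Nat.zero_le 1
  · unfold pat1
    rw [if_neg (by omega), if_neg (by omega), if_neg (by omega)]

lemma pat0_prefix {ε : ℕ → ℕ} {k : ℕ} (hε : Adm k ε) (n : ℕ) :
    ∀ i < k+1, pat0 ε k n i = ε i := by
  intro i hi
  unfold pat0
  rcases lt_or_ge i k with h | h
  · rw [if_pos h]
  · have hik : i = k := by omega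
    rw [if_neg (by omega), if_neg (by omega), hε.2.1 i h]

lemma pat1_prefix {ε : ℕ → ℕ} (k n : ℕ) :
    ∀ i < k+1, pat1 ε k n i = Function.update ε k 1 i := by
  intro i hi
  unfold pat1
  rcases lt_or_ge i k with h | h
  · rw [if_pos h, Function.update_of_ne (by omega)]
  · have hik : i = k := by omega
    rw [if_neg (by omega), if_pos hik, hik, Function.update_self]

section ConnS

variable {α : ℝ × ℂ} {r : ℝ}

lemma centers_dist (hr0 : 0 ≤ r) (hr1 : r < 1) (hr7 : (0.7:ℝ) ≤ r)
    (hnorm : ∀ m : ℕ, ‖α ^ m‖ ≤ r ^ m)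
    (hid : α^4 = α^3 + α^2 + α + 1)
    (hinv : ∀ (w : ℝ × ℂ) (m : ℕ), (w * (1+α) = α ^ m ∨ w * (1+α) = -(α ^ m)) →
      ‖w‖ ≤ r ^ m / (1-r))
    (ε : ℕ → ℕ) (k M : ℕ) :
    dist (pval α (pat0 ε k (k+1+M)) (k+1+M)) (pval α (pat1 ε k (k+1+M)) (k+1+M))
      ≤ 2 * Rr r (k+1+M) := by
  have h1r : (0:ℝ) < 1 - r := by linarith
  have hd : dist (pval α (pat0 ε k (k+1+M)) (k+1+M)) (pval α (pat1 ε k (k+1+M)) (k+1+M))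
      = ‖α ^ (k+4) * (1 - ∑ j ∈ Finset.range M, ((dInt (j+1) : ℤ) : ℝ × ℂ) * α ^ (j+1))‖ := by
    rw [dist_eq_norm, ← centers_diff α ε k M, norm_sub_rev]
  rw [hd]
  rcases lt_or_ge M 3 with hM | hM
  · -- small cases : the factor is 1, 1, or 1 + α²
    have hpow : ∀ m : ℕ, (0:ℝ) ≤ r ^ m := fun m => pow_nonneg hr0 m
    interval_cases M
    · simp only [Finset.range_zero, Finset.sum_empty, sub_zero, mul_one]
      refine le_trans (hnorm (k+4)) ?_
      rw [Rr, mul_div_assoc', le_div_iff₀ h1r]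
      have epow : r ^ (k+1+4) = r ^ (k+4) * r := by
        rw [← pow_succ]
      rw [epow]
      have hfact : 1 - r ≤ 2 * r := by linarith
      calc r ^ (k+4) * (1-r) ≤ r ^ (k+4) * (2*r) :=
            mul_le_mul_of_nonneg_left hfact (hpow (k+4))
        _ = 2 * (r ^ (k+4) * r) := by ring
    · have h1 : ((dInt 1 : ℤ) : ℝ × ℂ) = 0 := by norm_num [dInt]
      simp only [Finset.sum_range_succ, Finset.sum_range_zero, h1, zero_mul, add_zero,
        zero_add, sub_zero, mul_one]
      refine le_trans (hnorm (k+4)) ?_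
      rw [Rr, mul_div_assoc', le_div_iff₀ h1r]
      have epow : r ^ (k+1+1+4) = r ^ (k+4) * r ^ 2 := by
        rw [← pow_add]
      rw [epow]
      have hsq : (0.7:ℝ)^2 ≤ r^2 := pow_le_pow_left₀ (by norm_num) hr7 2
      have hfact : 1 - r ≤ 2 * r ^ 2 := by nlinarith
      calc r ^ (k+4) * (1-r) ≤ r ^ (k+4) * (2 * r ^ 2) :=
            mul_le_mul_of_nonneg_left hfact (hpow (k+4))
        _ = 2 * (r ^ (k+4) * r ^ 2) := by ring
    · have h1 : ((dInt 1 : ℤ) : ℝ × ℂ) = 0 := by norm_num [dInt]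
      have h2 : ((dInt 2 : ℤ) : ℝ × ℂ) = -1 := by norm_num [dInt]
      simp only [Finset.sum_range_succ, Finset.sum_range_zero, h1, h2, zero_mul, add_zero,
        zero_add, neg_one_mul, sub_neg_eq_add]
      have hsplit : α ^ (k+4) * (1 + α ^ (1+1)) = α ^ (k+4) + α ^ (k+6) := by
        rw [mul_add, mul_one, ← pow_add]
      rw [hsplit]
      refine le_trans (norm_add_le _ _) ?_
      refine le_trans (add_le_add (hnorm (k+4)) (hnorm (k+6))) ?_
      rw [Rr, mul_div_assoc', le_div_iff₀ h1r]
      have e1 : r ^ (k+6) = r ^ (k+4) * r ^ 2 := by rw [← pow_add]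
      have e2 : r ^ (k+2+1+4) = r ^ (k+4) * r ^ 3 := by
        rw [← pow_add]
      rw [e1, e2]
      have hcb : (0.7:ℝ)^3 ≤ r^3 := pow_le_pow_left₀ (by norm_num) hr7 3
      have hsq : (0.7:ℝ)^2 ≤ r^2 := pow_le_pow_left₀ (by norm_num) hr7 2
      have hr2 : r^2 ≤ 1 := by nlinarith
      have hfact : (1 + r^2) * (1-r) ≤ 2 * r ^ 3 := by nlinarith
      calc (r ^ (k+4) + r ^ (k+4) * r ^ 2) * (1-r)
            = r ^ (k+4) * ((1 + r^2) * (1-r)) := by ring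
        _ ≤ r ^ (k+4) * (2 * r ^ 3) :=
            mul_le_mul_of_nonneg_left hfact (hpow (k+4))
        _ = 2 * (r ^ (k+4) * r ^ 3) := by ring
  · -- M ≥ 3 : use the key identity
    set w := α ^ (k+4) * (1 - ∑ j ∈ Finset.range M, ((dInt (j+1) : ℤ) : ℝ × ℂ) * α ^ (j+1))
      with hw
    have hsum : (1 : ℝ × ℂ) - ∑ j ∈ Finset.range (M+1), ((dInt j : ℤ) : ℝ × ℂ) * α ^ j
        = 1 - ∑ j ∈ Finset.range M, ((dInt (j+1) : ℤ) : ℝ × ℂ) * α ^ (j+1) := by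
      rw [Finset.sum_range_succ']
      norm_num [dInt]
    have hkey := key_identity hid M hM
    rw [hsum] at hkey
    have hwmul : w * (1 + α) = (-1 : ℝ × ℂ) ^ (M+1) * α ^ ((k+1+M)+4) := by
      rw [hw, mul_assoc, hkey]
      rw [show (k+1+M)+4 = (k+4) + (M+1) by ring, pow_add]
      ring
    have hb : ‖w‖ ≤ r ^ ((k+1+M)+4) / (1-r) := by
      apply hinv w ((k+1+M)+4)
      rcases Nat.even_or_odd (M+1) with he | ho
      · left; rw [hwmul, he.neg_one_pow, one_mul]
      · right; rw [hwmul, ho.neg_one_pow]; ring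
    refine le_trans hb ?_
    rw [Rr]
    have := Rr_nonneg hr0 hr1 (k+1+M)
    rw [Rr] at this
    linarith

lemma connS (hr0 : 0 ≤ r) (hr1 : r < 1) (hr7 : (0.7:ℝ) ≤ r)
    (hnorm : ∀ m : ℕ, ‖α ^ m‖ ≤ r ^ m)
    (hid : α^4 = α^3 + α^2 + α + 1)
    (hinv : ∀ (w : ℝ × ℂ) (m : ℕ), (w * (1+α) = α ^ m ∨ w * (1+α) = -(α ^ m)) →
      ‖w‖ ≤ r ^ m / (1-r)) :
    ∀ (dep k : ℕ) (ε : ℕ → ℕ), Adm k ε → IsConnected (SS α r ε k (k + dep)) := by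
  intro dep
  induction dep with
  | zero =>
      intro k ε hAdm
      have hset : SS α r ε k (k+0) = Metric.closedBall (pval α ε k) (Rr r k) := by
        ext z
        simp only [mem_SS, Nat.add_zero]
        constructor
        · rintro ⟨δ, ⟨hδ, hpre⟩, hz⟩
          have hde : δ = ε := funext fun i => by
            rcases lt_or_ge i k with h | h
            · exact hpre i h
            · rw [hδ.2.1 i h, hAdm.2.1 i h]
          rwa [hde] at hz
        · intro hz
          exact ⟨ε, ⟨hAdm, fun i _ => rfl⟩, hz⟩
      rw [hset]
      exact ⟨Metric.nonempty_closedBall.2 (Rr_nonneg hr0 hr1 k),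
        (convex_closedBall _ _).isPreconnected⟩
  | succ dep ih =>
      intro k ε hAdm
      have hn : k + (dep+1) = (k+1) + dep := by omega
      rw [hn]
      set ε1 := Function.update ε k 1 with hε1
      have hAdm' : Adm (k+1) ε :=
        ⟨hAdm.1, fun i hi => hAdm.2.1 i (by omega), hAdm.2.2⟩
      have hsplit : SS α r ε k ((k+1)+dep) = SS α r ε (k+1) ((k+1)+dep) ∪
          SS α r ε1 (k+1) ((k+1)+dep) := by
        ext z
        simp only [mem_SS, Set.mem_union]
        constructor
        · rintro ⟨δ, ⟨hδ, hpre⟩, hz⟩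
          rcases Nat.le_one_iff_eq_zero_or_eq_one.1 (hδ.1 k) with h0 | h1
          · left
            refine ⟨δ, ⟨hδ, fun i hi => ?_⟩, hz⟩
            rcases lt_or_ge i k with h | h
            · exact hpre i h
            · have : i = k := by omega
              rw [this, h0, hAdm.2.1 k le_rfl]
          · right
            refine ⟨δ, ⟨hδ, fun i hi => ?_⟩, hz⟩
            rcases lt_or_ge i k with h | h
            · rw [hpre i h, hε1, Function.update_of_ne (by omega)]
            · have : i = k := by omega
              rw [this, h1, hε1, Function.update_self]
        · rintro (⟨δ, ⟨hδ, hpre⟩, hz⟩ | ⟨δ, ⟨hδ, hpre⟩, hz⟩)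
          · exact ⟨δ, ⟨hδ, fun i hi => hpre i (by omega)⟩, hz⟩
          · refine ⟨δ, ⟨hδ, fun i hi => ?_⟩, hz⟩
            rw [hpre i (by omega), hε1, Function.update_of_ne (by omega)]
      by_cases hA : ∃ j, j + 3 = k ∧ ε j = 1 ∧ ε (j+1) = 1 ∧ ε (j+2) = 1
      · have hempty : SS α r ε1 (k+1) ((k+1)+dep) = ∅ := by
          rw [Set.eq_empty_iff_forall_notMem]
          intro z hz
          obtain ⟨δ, ⟨hδ, hpre⟩, -⟩ := mem_SS.1 hz
          obtain ⟨j, hj, e0, e1, e2⟩ := hA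
          refine hδ.2.2 j ⟨?_, ?_, ?_, ?_⟩
          · rw [hpre j (by omega), hε1, Function.update_of_ne (by omega)]; exact e0
          · rw [hpre (j+1) (by omega), hε1, Function.update_of_ne (by omega)]; exact e1
          · rw [hpre (j+2) (by omega), hε1, Function.update_of_ne (by omega)]; exact e2
          · rw [show j+3 = k from hj, hpre k (by omega), hε1, Function.update_self]
        rw [hsplit, hempty, Set.union_empty]
        exact ih (k+1) ε hAdm'
      · have hAdm1 : Adm (k+1) ε1 := by
          refine ⟨fun i => ?_, fun i hi => ?_, fun j hj => ?_⟩
          · rcases eq_or_ne i k with h | h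
            · rw [h, hε1, Function.update_self]
            · rw [hε1, Function.update_of_ne h]; exact hAdm.1 i
          · rw [hε1, Function.update_of_ne (by omega)]
            exact hAdm.2.1 i (by omega)
          · obtain ⟨b0, b1, b2, b3⟩ := hj
            have hcl : ∀ x, ε1 x = 1 → x = k ∨ (x < k ∧ ε x = 1) := by
              intro x hx
              rcases eq_or_ne x k with h | h
              · exact Or.inl h
              · rw [hε1, Function.update_of_ne h] at hx
                right
                refine ⟨?_, hx⟩
                by_contra hge
                rw [hAdm.2.1 x (by omega)] at hx
                exact one_ne_zero hx.symm
            rcases hcl _ b0 with h0 | ⟨hk0, he0⟩ <;>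
            rcases hcl _ b1 with h1 | ⟨hk1, he1⟩ <;>
            rcases hcl _ b2 with h2 | ⟨hk2, he2⟩ <;>
            rcases hcl _ b3 with h3 | ⟨hk3, he3⟩ <;>
              first
                | exact hAdm.2.2 j ⟨he0, he1, he2, he3⟩
                | exact hA ⟨j, by omega, he0, he1, he2⟩
                | omega
        rw [hsplit]
        refine IsConnected.union ?_ (ih (k+1) ε hAdm') (ih (k+1) ε1 hAdm1)
        -- the two pieces share a point near the two pattern words
        set n := (k+1) + dep with hndef
        have hn' : n = k + 1 + dep := by omega
        set c0 := pval α (pat0 ε k n) n with hc0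
        set c1 := pval α (pat1 ε k n) n with hc1
        have hdist : dist c0 c1 ≤ 2 * Rr r n := by
          rw [hc0, hc1, hn']
          exact centers_dist hr0 hr1 hr7 hnorm hid hinv ε k dep
        refine ⟨midpoint ℝ c0 c1, ?_, ?_⟩
        · rw [mem_SS]
          refine ⟨pat0 ε k n, ⟨by rw [hn']; exact pat0_adm hAdm dep, ?_⟩, ?_⟩
          · exact pat0_prefix hAdm n
          · rw [Metric.mem_closedBall, ← hc0, dist_midpoint_left]
            have h2n : ‖(2:ℝ)‖ = 2 := by norm_num
            rw [h2n]
            linarith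
        · rw [mem_SS]
          refine ⟨pat1 ε k n, ⟨by rw [hn']; exact pat1_adm hAdm dep hA, ?_⟩, ?_⟩
          · intro i hi
            rw [pat1_prefix k n i hi, hε1]
          · rw [Metric.mem_closedBall, ← hc1, dist_midpoint_right]
            have h2n : ‖(2:ℝ)‖ = 2 := by norm_num
            rw [h2n]
            linarith

end ConnS

end RauzyAux

namespace RauzyAux

section KKprops

variable {α : ℝ × ℂ} {r : ℝ}

lemma adm_zero : ∀ n : ℕ, Adm n (fun _ => 0) :=
  fun n => ⟨fun _ => Nat.zero_le 1, fun _ _ => rfl, fun j h => by simp at h⟩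

lemma KK_connected (hr0 : 0 ≤ r) (hr1 : r < 1) (hr7 : (0.7:ℝ) ≤ r)
    (hnorm : ∀ m : ℕ, ‖α ^ m‖ ≤ r ^ m)
    (hid : α^4 = α^3 + α^2 + α + 1)
    (hinv : ∀ (w : ℝ × ℂ) (m : ℕ), (w * (1+α) = α ^ m ∨ w * (1+α) = -(α ^ m)) →
      ‖w‖ ≤ r ^ m / (1-r))
    (n : ℕ) : IsConnected (KK α r n) := by
  have := connS hr0 hr1 hr7 hnorm hid hinv n 0 (fun _ => 0) (adm_zero 0)
  simpa [KK] using this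

lemma adm_set_finite (n : ℕ) (P : (ℕ → ℕ) → Prop) :
    {δ : ℕ → ℕ | Adm n δ ∧ P δ}.Finite := by
  have hsub : {δ : ℕ → ℕ | Adm n δ ∧ P δ} ⊆
      (fun g : Fin n → Fin 2 => fun i => if h : i < n then (g ⟨i, h⟩ : ℕ) else 0) ''
        Set.univ := by
    intro δ hδ
    refine ⟨fun j => ⟨δ j, by have := hδ.1.1 j; omega⟩, Set.mem_univ _, ?_⟩
    funext i
    by_cases h : i < n
    · simp [h]
    · simp [h, hδ.1.2.1 i (by omega)]
  exact Set.Finite.subset (Set.finite_univ.image _) hsub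

lemma KK_compact (n : ℕ) : IsCompact (KK α r n) :=
  Set.Finite.isCompact_biUnion (adm_set_finite n _) fun _ _ => isCompact_closedBall _ _

lemma KK_closed (n : ℕ) : IsClosed (KK α r n) :=
  Set.Finite.isClosed_biUnion (adm_set_finite n _) fun _ _ => Metric.isClosed_closedBall

lemma KK_mono (hr0 : 0 ≤ r) (hr1 : r < 1)
    (hnorm : ∀ m : ℕ, ‖α ^ m‖ ≤ r ^ m) (n : ℕ) :
    KK α r (n+1) ⊆ KK α r n := by
  intro z hz
  obtain ⟨δ, ⟨hδ, -⟩, hz⟩ := mem_SS.1 hz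
  set δ' : ℕ → ℕ := fun i => if i < n then δ i else 0 with hδ'
  have hδ'ones : ∀ i, δ' i = 1 → δ i = 1 := by
    intro i hi
    have hi' : (if i < n then δ i else 0) = 1 := hi
    by_cases h : i < n
    · rwa [if_pos h] at hi'
    · rw [if_neg h] at hi'; exact absurd hi' (by norm_num)
  have hδ'adm : Adm n δ' := by
    refine ⟨fun i => ?_, fun i hi => ?_, fun j hj => ?_⟩
    · show (if i < n then δ i else 0) ≤ 1
      split_ifs with h
      · exact hδ.1 i
      · exact Nat.zero_le 1
    · show (if i < n then δ i else 0) = 0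
      rw [if_neg (by omega)]
    · exact hδ.2.2 j ⟨hδ'ones _ hj.1, hδ'ones _ hj.2.1, hδ'ones _ hj.2.2.1,
        hδ'ones _ hj.2.2.2⟩
  rw [KK, mem_SS]
  refine ⟨δ', ⟨hδ'adm, fun i hi => absurd hi (by omega)⟩, ?_⟩
  have hsum : pval α δ (n+1) = pval α δ' n + (δ n : ℝ × ℂ) * α ^ (n+4) := by
    rw [pval, Finset.sum_range_succ, ← pval]
    congr 1
    exact pval_congr α n fun i hi => by
      show δ i = (if i < n then δ i else 0)
      rw [if_pos hi]
  have hdist : dist (pval α δ' n) (pval α δ (n+1)) ≤ r ^ (n+4) := by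
    rw [dist_eq_norm, hsum]
    have : pval α δ' n - (pval α δ' n + (δ n : ℝ × ℂ) * α ^ (n+4))
        = -((δ n : ℝ × ℂ) * α ^ (n+4)) := by ring
    rw [this, norm_neg]
    exact term_norm_le hnorm (hδ.1 n) (n+4) hr0
  have hrad : Rr r (n+1) + r ^ (n+4) ≤ Rr r n := by
    rw [Rr, Rr]
    rw [div_add' _ _ _ (by linarith : (1:ℝ) - r ≠ 0), div_le_div_iff₀ (by linarith) (by linarith)]
    have : r ^ (n+1+4) = r ^ (n+4) * r := by rw [← pow_succ]
    nlinarith [pow_nonneg hr0 (n+4)]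
  have hball : Metric.closedBall (pval α δ (n+1)) (Rr r (n+1)) ⊆
      Metric.closedBall (pval α δ' n) (Rr r n) := by
    apply Metric.closedBall_subset_closedBall'
    rw [dist_comm]
    linarith
  exact hball hz

end KKprops

end RauzyAux

namespace RauzyAux

section Bridge

variable {α : ℝ × ℂ}

lemma zpow_shift (α : ℝ × ℂ) (n : ℕ) : α ^ ((n : ℤ) + 4) = α ^ (n + 4) := by
  rw [show ((n : ℤ) + 4) = ((n + 4 : ℕ) : ℤ) by push_cast; ring, zpow_natCast]

lemma emb_inj : Function.Injective (fun n : ℕ => (n : ℤ) + 4) := by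
  intro a b h
  have h' : (a : ℤ) + 4 = (b : ℤ) + 4 := h
  omega

/-- membership in the Rauzy fractal in terms of ℕ-indexed digit sequences -/
lemma mem_rauzyE_iff {z : ℝ × ℂ} :
    z ∈ RauzyE α ↔ ∃ f : ℕ → ℕ, (∀ i, f i ≤ 1) ∧ NoFour f ∧
      HasSum (fun n : ℕ => (f n : ℝ × ℂ) * α ^ (n + 4)) z := by
  constructor
  · rintro ⟨ε, ⟨hb, hlow, hnof⟩, hsum⟩
    refine ⟨fun n => ε ((n : ℤ) + 4), fun i => hb _, ?_, ?_⟩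
    · intro j hj
      obtain ⟨e0, e1, e2, e3⟩ := hj
      refine hnof ((j : ℤ) + 4) ⟨e0, ?_, ?_, ?_⟩
      · rw [show (j : ℤ) + 4 + 1 = ((j+1 : ℕ) : ℤ) + 4 by push_cast; ring]; exact e1
      · rw [show (j : ℤ) + 4 + 2 = ((j+2 : ℕ) : ℤ) + 4 by push_cast; ring]; exact e2
      · rw [show (j : ℤ) + 4 + 3 = ((j+3 : ℕ) : ℤ) + 4 by push_cast; ring]; exact e3
    · have hv : ∀ x : ℤ, x ∉ Set.range (fun n : ℕ => (n : ℤ) + 4) →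
          (ε x : ℝ × ℂ) * α ^ x = 0 := by
        intro x hx
        have hx4 : x < 4 := by
          by_contra hge
          exact hx ⟨(x - 4).toNat, by show ((x - 4).toNat : ℤ) + 4 = x; omega⟩
        rw [hlow x hx4]
        simp
      have h2 := (Function.Injective.hasSum_iff emb_inj hv).2 hsum
      have heq : ((fun i : ℤ => (ε i : ℝ × ℂ) * α ^ i) ∘ fun n : ℕ => (n : ℤ) + 4)
          = fun n : ℕ => (ε ((n : ℤ) + 4) : ℝ × ℂ) * α ^ (n + 4) := by
        funext n
        simp only [Function.comp_apply, zpow_shift]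
      rwa [heq] at h2
  · rintro ⟨f, hb, hnof, hsum⟩
    set ε : ℤ → ℕ := fun i => if h : 4 ≤ i then f (i - 4).toNat else 0 with hε
    have hval : ∀ (w : ℤ) (t : ℕ), w = (t : ℤ) + 4 → ε w = f t := by
      intro w t hw
      rw [hε]
      simp only
      rw [dif_pos (by omega)]
      congr 1
      omega
    have hlow : ∀ i : ℤ, i < 4 → ε i = 0 := by
      intro i hi
      rw [hε]
      simp only
      rw [dif_neg (by omega)]
    refine ⟨ε, ⟨?_, hlow, ?_⟩, ?_⟩
    · intro i
      rw [hε]; simp only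
      split_ifs
      · exact hb _
      · exact Nat.zero_le 1
    · intro i hi
      obtain ⟨e0, e1, e2, e3⟩ := hi
      have h4 : 4 ≤ i := by
        by_contra h
        rw [hlow i (by omega)] at e0
        exact one_ne_zero e0.symm
      set m := (i - 4).toNat with hm
      have him : i = (m : ℤ) + 4 := by omega
      refine hnof m ⟨?_, ?_, ?_, ?_⟩
      · rw [← hval i m him]; exact e0
      · rw [← hval (i+1) (m+1) (by omega)]; exact e1
      · rw [← hval (i+2) (m+2) (by omega)]; exact e2
      · rw [← hval (i+3) (m+3) (by omega)]; exact e3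
    · have hv : ∀ x : ℤ, x ∉ Set.range (fun n : ℕ => (n : ℤ) + 4) →
          (ε x : ℝ × ℂ) * α ^ x = 0 := by
        intro x hx
        have hx4 : x < 4 := by
          by_contra hge
          exact hx ⟨(x - 4).toNat, by show ((x - 4).toNat : ℤ) + 4 = x; omega⟩
        rw [hlow x hx4]
        simp
      apply (Function.Injective.hasSum_iff emb_inj hv).1
      have heq : ((fun i : ℤ => (ε i : ℝ × ℂ) * α ^ i) ∘ fun n : ℕ => (n : ℤ) + 4)
          = fun n : ℕ => (f n : ℝ × ℂ) * α ^ (n + 4) := by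
        funext n
        simp only [Function.comp_apply, zpow_shift]
        rw [hval ((n : ℤ) + 4) n rfl]
      rwa [heq]

end Bridge

end RauzyAux

namespace RauzyAux

section Geom

variable {α : ℝ × ℂ} {r : ℝ}

lemma hasSum_geom_shift (hr0 : 0 ≤ r) (hr1 : r < 1) (n : ℕ) :
    HasSum (fun j : ℕ => r ^ ((n + j) + 4)) (Rr r n) := by
  have h2 := (hasSum_geometric_of_lt_one hr0 hr1).mul_left (r ^ (n+4))
  have heq : (fun j : ℕ => r ^ (n+4) * r ^ j) = fun j : ℕ => r ^ ((n + j) + 4) := by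
    funext j; rw [← pow_add]; congr 1; omega
  rw [heq] at h2
  rw [Rr, div_eq_mul_inv]
  exact h2

lemma summable_pow4 (hr0 : 0 ≤ r) (hr1 : r < 1) : Summable (fun n : ℕ => r ^ (n+4)) := by
  have := (hasSum_geom_shift hr0 hr1 0).summable
  simpa using this

lemma hasSum_cut (hr0 : 0 ≤ r) (hr1 : r < 1) (n : ℕ) :
    HasSum (fun i : ℕ => if i < n then (0:ℝ) else r ^ (i+4)) (Rr r n) := by
  have hinj : Function.Injective (fun j : ℕ => n + j) := fun a b h => by
    have h' : n + a = n + b := h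
    omega
  have hv : ∀ x, x ∉ Set.range (fun j : ℕ => n + j) →
      (if x < n then (0:ℝ) else r ^ (x+4)) = 0 := by
    intro x hx
    have hxn : x < n := by
      by_contra h
      exact hx ⟨x - n, by show n + (x - n) = x; omega⟩
    rw [if_pos hxn]
  apply (Function.Injective.hasSum_iff hinj hv).1
  have heq : ((fun i : ℕ => if i < n then (0:ℝ) else r ^ (i+4)) ∘ fun j => n + j)
      = fun j : ℕ => r ^ ((n + j) + 4) := by
    funext j
    simp only [Function.comp_apply, if_neg (by omega : ¬ n + j < n)]
  rw [heq]
  exact hasSum_geom_shift hr0 hr1 n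

lemma pval_mem_E {δ : ℕ → ℕ} {n : ℕ} (hadm : Adm n δ) : pval α δ n ∈ RauzyE α := by
  rw [mem_rauzyE_iff]
  refine ⟨δ, hadm.1, hadm.2.2, ?_⟩
  have hv : ∀ x ∉ Finset.range n, (δ x : ℝ × ℂ) * α ^ (x+4) = 0 := by
    intro x hx
    rw [hadm.2.1 x (by simpa using hx)]
    simp
  exact (hasSum_sum_of_ne_finset_zero hv : HasSum _ _)

lemma E_subset_KK (hr0 : 0 ≤ r) (hr1 : r < 1) (hnorm : ∀ m : ℕ, ‖α ^ m‖ ≤ r ^ m)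
    (n : ℕ) : RauzyE α ⊆ KK α r n := by
  intro z hz
  obtain ⟨f, hb, hnof, hsum⟩ := mem_rauzyE_iff.1 hz
  set δ : ℕ → ℕ := fun i => if i < n then f i else 0 with hδ
  have hones : ∀ i, δ i = 1 → f i = 1 := by
    intro i hi
    have hi' : (if i < n then f i else 0) = 1 := hi
    by_cases h : i < n
    · rwa [if_pos h] at hi'
    · rw [if_neg h] at hi'; exact absurd hi' (by norm_num)
  have hadm : Adm n δ := by
    refine ⟨fun i => ?_, fun i hi => ?_, fun j hj => ?_⟩
    · show (if i < n then f i else 0) ≤ 1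
      split_ifs
      · exact hb i
      · exact Nat.zero_le 1
    · show (if i < n then f i else 0) = 0
      rw [if_neg (by omega)]
    · exact hnof j ⟨hones _ hj.1, hones _ hj.2.1, hones _ hj.2.2.1, hones _ hj.2.2.2⟩
  have hvan : ∀ x ∉ Finset.range n,
      (if x < n then (f x : ℝ × ℂ) * α ^ (x+4) else 0) = 0 := by
    intro x hx
    rw [if_neg (by simpa using hx)]
  have hhead : HasSum (fun i : ℕ => if i < n then (f i : ℝ × ℂ) * α ^ (i+4) else 0)
      (pval α δ n) := by
    have h : HasSum _ _ := hasSum_sum_of_ne_finset_zero hvan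
    have heq : ∑ i ∈ Finset.range n, (if i < n then (f i : ℝ × ℂ) * α ^ (i+4) else 0)
        = pval α δ n := by
      rw [pval]
      refine Finset.sum_congr rfl fun i hi => ?_
      have hin : i < n := Finset.mem_range.1 hi
      rw [if_pos hin]
      have : δ i = f i := by show (if i < n then f i else 0) = f i; rw [if_pos hin]
      rw [this]
    rwa [heq] at h
  have htail := hsum.sub hhead
  have htail_norm : ∀ i : ℕ,
      ‖(f i : ℝ × ℂ) * α ^ (i+4) - (if i < n then (f i : ℝ × ℂ) * α ^ (i+4) else 0)‖
        ≤ (if i < n then (0:ℝ) else r ^ (i+4)) := by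
    intro i
    by_cases h : i < n
    · simp [h]
    · simp only [if_neg h, sub_zero]
      exact term_norm_le hnorm (hb i) (i+4) hr0
  have hsummable : Summable (fun i : ℕ =>
      ‖(f i : ℝ × ℂ) * α ^ (i+4) - (if i < n then (f i : ℝ × ℂ) * α ^ (i+4) else 0)‖) :=
    Summable.of_nonneg_of_le (fun i => norm_nonneg _) htail_norm (hasSum_cut hr0 hr1 n).summable
  have hzsub : ‖z - pval α δ n‖ ≤ Rr r n := by
    calc ‖z - pval α δ n‖
        = ‖∑' i : ℕ, ((f i : ℝ × ℂ) * α ^ (i+4)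
            - (if i < n then (f i : ℝ × ℂ) * α ^ (i+4) else 0))‖ := by
          rw [htail.tsum_eq]
      _ ≤ ∑' i : ℕ, ‖(f i : ℝ × ℂ) * α ^ (i+4)
            - (if i < n then (f i : ℝ × ℂ) * α ^ (i+4) else 0)‖ :=
          norm_tsum_le_tsum_norm hsummable
      _ ≤ ∑' i : ℕ, (if i < n then (0:ℝ) else r ^ (i+4)) :=
          Summable.tsum_le_tsum htail_norm hsummable (hasSum_cut hr0 hr1 n).summable
      _ = Rr r n := (hasSum_cut hr0 hr1 n).tsum_eq
  rw [KK, mem_SS]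
  refine ⟨δ, ⟨hadm, fun i hi => absurd hi (by omega)⟩, ?_⟩
  rw [Metric.mem_closedBall, dist_eq_norm]
  exact hzsub

end Geom

section Compactness

variable {α : ℝ × ℂ} {r : ℝ}

def Cset : Set (ℕ → ℕ) := {f | (∀ i, f i ≤ 1) ∧ NoFour f}

def Fmap (α : ℝ × ℂ) : (ℕ → ℕ) → ℝ × ℂ :=
  fun f => ∑' n : ℕ, ((min (f n) 1 : ℕ) : ℝ × ℂ) * α ^ (n+4)

lemma Fmap_cont (hr0 : 0 ≤ r) (hr1 : r < 1) (hnorm : ∀ m : ℕ, ‖α ^ m‖ ≤ r ^ m) :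
    Continuous (Fmap α) := by
  refine continuous_tsum ?_ (summable_pow4 hr0 hr1) ?_
  · intro i
    exact (continuous_of_discreteTopology
      (f := fun m : ℕ => ((min m 1 : ℕ) : ℝ × ℂ) * α ^ (i+4))).comp (continuous_apply i)
  · intro n f
    exact term_norm_le hnorm (min_le_right _ _) (n+4) hr0

lemma Cset_compact : IsCompact (Cset) := by
  have h1 : IsClosed {f : ℕ → ℕ | ∀ i, f i ≤ 1} := by
    have he : {f : ℕ → ℕ | ∀ i, f i ≤ 1} = ⋂ i, (fun f : ℕ → ℕ => f i) ⁻¹' (Set.Iic 1) := by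
      ext f; simp [Set.mem_iInter]
    rw [he]
    exact isClosed_iInter fun i => (isClosed_discrete _).preimage (continuous_apply i)
  have h2 : IsClosed {f : ℕ → ℕ | NoFour f} := by
    have he : {f : ℕ → ℕ | NoFour f} = ⋂ j, ((fun f : ℕ → ℕ => f j) ⁻¹' {1} ∩
        ((fun f : ℕ → ℕ => f (j+1)) ⁻¹' {1} ∩ ((fun f : ℕ → ℕ => f (j+2)) ⁻¹' {1} ∩
          (fun f : ℕ → ℕ => f (j+3)) ⁻¹' {1})))ᶜ := by
      ext f
      simp [NoFour, Set.mem_iInter]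
    rw [he]
    refine isClosed_iInter fun j => IsOpen.isClosed_compl ?_
    exact ((isOpen_discrete _).preimage (continuous_apply j)).inter
      (((isOpen_discrete _).preimage (continuous_apply (j+1))).inter
        (((isOpen_discrete _).preimage (continuous_apply (j+2))).inter
          ((isOpen_discrete _).preimage (continuous_apply (j+3)))))
  have hclosed : IsClosed Cset := h1.inter h2
  have hsub : Cset ⊆ Set.pi Set.univ (fun _ : ℕ => Set.Iic 1) := fun f hf i _ => hf.1 i
  exact IsCompact.of_isClosed_subset
    (isCompact_univ_pi fun _ => (Set.finite_Iic 1).isCompact) hclosed hsub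

lemma E_eq_image (hr0 : 0 ≤ r) (hr1 : r < 1) (hnorm : ∀ m : ℕ, ‖α ^ m‖ ≤ r ^ m) :
    RauzyE α = Fmap α '' Cset := by
  ext z
  constructor
  · intro hz
    obtain ⟨f, hb, hnof, hsum⟩ := mem_rauzyE_iff.1 hz
    refine ⟨f, ⟨hb, hnof⟩, ?_⟩
    have heq : (fun n : ℕ => ((min (f n) 1 : ℕ) : ℝ × ℂ) * α ^ (n+4))
        = fun n : ℕ => (f n : ℝ × ℂ) * α ^ (n+4) := by
      funext n
      rw [min_eq_left (hb n)]
    rw [Fmap, heq]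
    exact hsum.tsum_eq
  · rintro ⟨f, ⟨hb, hnof⟩, rfl⟩
    rw [mem_rauzyE_iff]
    refine ⟨f, hb, hnof, ?_⟩
    have hsummable : Summable (fun n : ℕ => ((min (f n) 1 : ℕ) : ℝ × ℂ) * α ^ (n+4)) := by
      refine Summable.of_norm_bounded (g := fun n : ℕ => r ^ (n+4)) (summable_pow4 hr0 hr1) ?_
      intro n
      exact term_norm_le hnorm (min_le_right _ _) (n+4) hr0
    have heq : (fun n : ℕ => ((min (f n) 1 : ℕ) : ℝ × ℂ) * α ^ (n+4))
        = fun n : ℕ => (f n : ℝ × ℂ) * α ^ (n+4) := by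
      funext n
      rw [min_eq_left (hb n)]
    have hsummable' : Summable (fun n : ℕ => (f n : ℝ × ℂ) * α ^ (n+4)) := by
      rwa [heq] at hsummable
    have h := hsummable'.hasSum
    rw [Fmap, heq]
    exact h

lemma E_compact (hr0 : 0 ≤ r) (hr1 : r < 1) (hnorm : ∀ m : ℕ, ‖α ^ m‖ ≤ r ^ m) :
    IsCompact (RauzyE α) := by
  rw [E_eq_image hr0 hr1 hnorm]
  exact Cset_compact.image (Fmap_cont hr0 hr1 hnorm)

lemma E_nonempty : (RauzyE α).Nonempty := by
  refine ⟨0, ?_⟩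
  rw [mem_rauzyE_iff]
  refine ⟨fun _ => 0, fun _ => Nat.zero_le 1, fun j h => by simp at h, ?_⟩
  simpa using hasSum_zero

end Compactness

end RauzyAux

namespace RauzyAux

section Final

variable {α : ℝ × ℂ} {r : ℝ}

lemma Rr_tendsto (hr0 : 0 ≤ r) (hr1 : r < 1) :
    Filter.Tendsto (fun n : ℕ => Rr r n) Filter.atTop (nhds 0) := by
  have h2 := (tendsto_pow_atTop_nhds_zero_of_lt_one hr0 hr1).const_mul (r^4 / (1-r))
  rw [mul_zero] at h2
  have heq : (fun n : ℕ => r^4/(1-r) * r ^ n) = fun n : ℕ => Rr r n := by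
    funext n
    rw [Rr, show n+4 = 4+n by omega, pow_add]
    ring
  rwa [heq] at h2

lemma E_mem_closure (hr0 : 0 ≤ r) (hr1 : r < 1)
    {z : ℝ × ℂ} (hz : ∀ n, z ∈ KK α r n) : z ∈ closure (RauzyE α) := by
  rw [Metric.mem_closure_iff]
  intro η hη
  have hev : ∀ᶠ n in Filter.atTop, Rr r n < η :=
    Filter.Tendsto.eventually_lt_const hη (Rr_tendsto hr0 hr1)
  obtain ⟨n, hn⟩ := hev.exists
  obtain ⟨δ, ⟨hadm, -⟩, hball⟩ := mem_SS.1 (hz n)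
  refine ⟨pval α δ n, pval_mem_E hadm, ?_⟩
  rw [Metric.mem_closedBall] at hball
  exact lt_of_le_of_lt hball hn

lemma E_connected (hr0 : 0 ≤ r) (hr1 : r < 1) (hr7 : (0.7:ℝ) ≤ r)
    (hnorm : ∀ m : ℕ, ‖α ^ m‖ ≤ r ^ m)
    (hid : α^4 = α^3 + α^2 + α + 1)
    (hinv : ∀ (w : ℝ × ℂ) (m : ℕ), (w * (1+α) = α ^ m ∨ w * (1+α) = -(α ^ m)) →
      ‖w‖ ≤ r ^ m / (1-r)) :
    IsConnected (RauzyE α) := by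
  refine ⟨E_nonempty, ?_⟩
  have hEc : IsCompact (RauzyE α) := E_compact hr0 hr1 hnorm
  have hEcl : IsClosed (RauzyE α) := hEc.isClosed
  intro u v hu hv hcov hnu hnv
  by_contra hne
  rw [Set.not_nonempty_iff_eq_empty] at hne
  have hAeq : RauzyE α ∩ u = RauzyE α ∩ vᶜ := by
    ext x
    constructor
    · rintro ⟨hxE, hxu⟩
      refine ⟨hxE, fun hxv => ?_⟩
      have hmem : x ∈ RauzyE α ∩ (u ∩ v) := ⟨hxE, hxu, hxv⟩
      rw [hne] at hmem
      exact hmem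
    · rintro ⟨hxE, hxv⟩
      rcases hcov hxE with h | h
      · exact ⟨hxE, h⟩
      · exact absurd h hxv
  have hBeq : RauzyE α ∩ v = RauzyE α ∩ uᶜ := by
    ext x
    constructor
    · rintro ⟨hxE, hxv⟩
      refine ⟨hxE, fun hxu => ?_⟩
      have hmem : x ∈ RauzyE α ∩ (u ∩ v) := ⟨hxE, hxu, hxv⟩
      rw [hne] at hmem
      exact hmem
    · rintro ⟨hxE, hxu⟩
      rcases hcov hxE with h | h
      · exact absurd h hxu
      · exact ⟨hxE, h⟩
  have hAc : IsCompact (RauzyE α ∩ u) := by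
    rw [hAeq]; exact hEc.inter_right hv.isClosed_compl
  have hBc : IsCompact (RauzyE α ∩ v) := by
    rw [hBeq]; exact hEc.inter_right hu.isClosed_compl
  have hdisj : Disjoint (RauzyE α ∩ u) (RauzyE α ∩ v) := by
    rw [Set.disjoint_iff_inter_eq_empty]
    have heq2 : (RauzyE α ∩ u) ∩ (RauzyE α ∩ v) = RauzyE α ∩ (u ∩ v) := by
      ext x; constructor
      · rintro ⟨⟨h1, h2⟩, ⟨h3, h4⟩⟩; exact ⟨h1, h2, h4⟩
      · rintro ⟨h1, h2, h3⟩; exact ⟨⟨h1, h2⟩, ⟨h1, h3⟩⟩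
    rw [heq2]; exact hne
  obtain ⟨U, V, hUo, hVo, hAU, hBV, hUV⟩ :=
    SeparatedNhds.of_isCompact_isCompact hAc hBc hdisj
  have hEUV : RauzyE α ⊆ U ∪ V := by
    intro x hx
    rcases hcov hx with h | h
    · exact Or.inl (hAU ⟨hx, h⟩)
    · exact Or.inr (hBV ⟨hx, h⟩)
  have hKn : ∃ n, KK α r n ⊆ U ∪ V := by
    by_contra hno
    push_neg at hno
    set Cn : ℕ → Set (ℝ × ℂ) := fun n => KK α r n ∩ (U ∪ V)ᶜ with hCn
    have hmono : ∀ n, Cn (n+1) ⊆ Cn n := fun n x hx =>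
      ⟨KK_mono hr0 hr1 hnorm n hx.1, hx.2⟩
    have hnonempty : ∀ n, (Cn n).Nonempty := by
      intro n
      rcases Set.not_subset.1 (hno n) with ⟨x, hx1, hx2⟩
      exact ⟨x, hx1, hx2⟩
    have hclosed : ∀ n, IsClosed (Cn n) := fun n =>
      (KK_closed n).inter (hUo.union hVo).isClosed_compl
    have hcomp : IsCompact (Cn 0) :=
      (KK_compact 0).inter_right (hUo.union hVo).isClosed_compl
    obtain ⟨z, hz⟩ := IsCompact.nonempty_iInter_of_sequence_nonempty_isCompact_isClosed
      Cn hmono hnonempty hcomp hclosed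
    have hzK : ∀ n, z ∈ KK α r n := fun n => (Set.mem_iInter.1 hz n).1
    have hzE : z ∈ RauzyE α := by
      have h := E_mem_closure hr0 hr1 hzK
      rwa [hEcl.closure_eq] at h
    exact (Set.mem_iInter.1 hz 0).2 (hEUV hzE)
  obtain ⟨n, hKUV⟩ := hKn
  have hKconn := KK_connected hr0 hr1 hr7 hnorm hid hinv n
  have hKU : (KK α r n ∩ U).Nonempty := by
    obtain ⟨a, haE, hau⟩ := hnu
    exact ⟨a, E_subset_KK hr0 hr1 hnorm n haE, hAU ⟨haE, hau⟩⟩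
  have hKV : (KK α r n ∩ V).Nonempty := by
    obtain ⟨b, hbE, hbv⟩ := hnv
    exact ⟨b, E_subset_KK hr0 hr1 hnorm n hbE, hBV ⟨hbE, hbv⟩⟩
  obtain ⟨x, -, hxU, hxV⟩ := hKconn.isPreconnected U V hUo hVo hKUV hKU hKV
  exact Set.disjoint_left.1 hUV hxU hxV

end Final

end RauzyAux

open RauzyAux in
theorem rauzy_compact_connected (β β₂ : ℝ) (β₃ : ℂ)
    (hβ : 1 < β) (hβroot : β ^ 4 = β ^ 3 + β ^ 2 + β + 1)
    (hβ₂neg : -1 < β₂) (hβ₂pos : β₂ < 0)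
    (hβ₂root : β₂ ^ 4 = β₂ ^ 3 + β₂ ^ 2 + β₂ + 1)
    (hβ₃abs : ‖β₃‖ < 1) (hβ₃im : β₃.im ≠ 0)
    (hβ₃root : β₃ ^ 4 = β₃ ^ 3 + β₃ ^ 2 + β₃ + 1)
    (α : ℝ × ℂ) (hα : α = (β₂, β₃)) :
    IsCompact (RauzyE α) ∧ IsConnected (RauzyE α) := by
  subst hα
  set r : ℝ := ‖((β₂, β₃) : ℝ × ℂ)‖ with hrdef
  have hr0 : 0 ≤ r := norm_nonneg _
  have hrmax : r = max ‖β₂‖ ‖β₃‖ := Prod.norm_def _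
  have hβ₂r : |β₂| ≤ r := by
    rw [hrmax, ← Real.norm_eq_abs]
    exact le_max_left _ _
  have hβ₃r : ‖β₃‖ ≤ r := by
    rw [hrmax]
    exact le_max_right _ _
  have hr1 : r < 1 := by
    rw [hrmax]
    apply max_lt
    · rw [Real.norm_eq_abs]
      exact abs_lt.2 ⟨hβ₂neg, by linarith⟩
    · exact hβ₃abs
  have hβ₂7 : β₂ ≤ -0.7 := by
    by_contra h
    push_neg at h
    nlinarith [sq_nonneg β₂, sq_nonneg (β₂ + 1/2), sq_nonneg (β₂^2 + β₂),
      mul_pos (show (0:ℝ) < β₂ + 0.7 by linarith) (show (0:ℝ) < -β₂ by linarith)]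
  have hr7 : (0.7 : ℝ) ≤ r := by
    refine le_trans ?_ hβ₂r
    rw [abs_of_neg hβ₂pos]
    linarith
  have hpow_comp : ∀ m : ℕ, ((β₂, β₃) : ℝ × ℂ) ^ m = (β₂ ^ m, β₃ ^ m) := by
    intro m
    rw [Prod.ext_iff]
    exact ⟨by rw [Prod.pow_fst], by rw [Prod.pow_snd]⟩
  have hid : ((β₂, β₃) : ℝ × ℂ)^4 = ((β₂, β₃) : ℝ × ℂ)^3 + ((β₂, β₃) : ℝ × ℂ)^2
      + ((β₂, β₃) : ℝ × ℂ) + 1 := by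
    rw [hpow_comp, hpow_comp, hpow_comp, Prod.ext_iff]
    constructor
    · simpa using hβ₂root
    · simpa using hβ₃root
  have hnorm : ∀ m : ℕ, ‖((β₂, β₃) : ℝ × ℂ) ^ m‖ ≤ r ^ m := by
    intro m
    rw [hpow_comp, Prod.norm_def]
    apply max_le
    · rw [Real.norm_eq_abs, abs_pow]
      exact pow_le_pow_left₀ (abs_nonneg _) hβ₂r m
    · rw [norm_pow]
      exact pow_le_pow_left₀ (norm_nonneg _) hβ₃r m
  have h1r : (0:ℝ) < 1 - r := by linarith
  have hinv : ∀ (w : ℝ × ℂ) (m : ℕ),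
      (w * (1 + ((β₂, β₃) : ℝ × ℂ)) = ((β₂, β₃) : ℝ × ℂ) ^ m ∨
        w * (1 + ((β₂, β₃) : ℝ × ℂ)) = -(((β₂, β₃) : ℝ × ℂ) ^ m)) →
      ‖w‖ ≤ r ^ m / (1-r) := by
    intro w m hw
    have hcomp : |w.1 * (1 + β₂)| = |β₂ ^ m| ∧
        ‖w.2 * (1 + β₃)‖ = ‖β₃ ^ m‖ := by
      rcases hw with hw | hw
      · have h1 := congrArg Prod.fst hw
        have h2 := congrArg Prod.snd hw
        simp only [Prod.fst_mul, Prod.snd_mul, Prod.fst_add, Prod.snd_add,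
          Prod.fst_one, Prod.snd_one, hpow_comp] at h1 h2
        rw [h1, h2]
        exact ⟨rfl, rfl⟩
      · have h1 := congrArg Prod.fst hw
        have h2 := congrArg Prod.snd hw
        simp only [Prod.fst_mul, Prod.snd_mul, Prod.fst_add, Prod.snd_add,
          Prod.fst_one, Prod.snd_one, Prod.fst_neg, Prod.snd_neg, hpow_comp] at h1 h2
        rw [h1, h2]
        simp
    have h1p : (0:ℝ) < 1 + β₂ := by linarith
    have hb1 : |w.1| * (1 + β₂) = |β₂| ^ m := by
      have := hcomp.1
      rwa [abs_mul, abs_of_pos h1p, abs_pow] at this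
    have hrm : |β₂| ^ m ≤ r ^ m := pow_le_pow_left₀ (abs_nonneg _) hβ₂r m
    have h1rb : 1 - r ≤ 1 + β₂ := by
      have hh : -β₂ ≤ |β₂| := neg_le_abs β₂
      have := le_trans hh hβ₂r
      linarith
    have hw1 : |w.1| ≤ r ^ m / (1-r) := by
      rw [le_div_iff₀ h1r]
      calc |w.1| * (1-r) ≤ |w.1| * (1+β₂) :=
            mul_le_mul_of_nonneg_left h1rb (abs_nonneg _)
        _ = |β₂| ^ m := hb1
        _ ≤ r ^ m := hrm
    have hb2 : ‖w.2‖ * ‖1+β₃‖ = ‖β₃‖ ^ m := by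
      have h := hcomp.2
      rwa [norm_mul, norm_pow] at h
    have habs13 : 1 - r ≤ ‖1+β₃‖ := by
      have htri : ‖(1+β₃) + (-β₃)‖ ≤ ‖1+β₃‖ + ‖-β₃‖ :=
        norm_add_le _ _
      have he : (1+β₃) + (-β₃) = 1 := by ring
      rw [he, norm_one, norm_neg] at htri
      linarith [hβ₃r]
    have hw2 : ‖w.2‖ ≤ r ^ m / (1-r) := by
      rw [le_div_iff₀ h1r]
      calc ‖w.2‖ * (1-r) ≤ ‖w.2‖ * ‖1+β₃‖ :=
            mul_le_mul_of_nonneg_left habs13 (norm_nonneg _)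
        _ = ‖β₃‖ ^ m := hb2
        _ ≤ r ^ m := pow_le_pow_left₀ (norm_nonneg _) hβ₃r m
    rw [Prod.norm_def]
    apply max_le
    · rw [Real.norm_eq_abs]; exact hw1
    · exact hw2
  refine ⟨E_compact hr0 hr1 hnorm, E_connected hr0 hr1 hr7 hnorm hid hinv⟩
end
end

section
/- Let (ε_i)_{i≥0} and (ε'_i)_{i≥0} be two sequences in 𝒟^∞. Then |Σ_{i=0}^∞ (ε_i - ε'_i) β₂ⁱ| ≤ 1/(1+β₂), and |Σ_{i=0}^∞ (ε_i - ε'_i) β₃ⁱ| ≤ C/(1 - |β₃|⁶), where C = max{ |Σ_{i=0}^5 (c_i - d_i) β₃ⁱ| : (c_i)_{0≤i≤5}, (d_i)_{0≤i≤5} ∈ 𝒟 }. -/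
open MeasureTheory

noncomputable section

/-- A finite word `c₀ c₁ … c₅ ∈ 𝒟` of length 6 : digits 0,1, no four consecutive 1's. -/
def IsWord6 (c : ℕ → ℕ) : Prop :=
  (∀ i, c i ≤ 1) ∧ (∀ i, 6 ≤ i → c i = 0) ∧
  (∀ i : ℕ, ¬ (c i = 1 ∧ c (i + 1) = 1 ∧ c (i + 2) = 1 ∧ c (i + 3) = 1))

lemma delta_abs_le (a b : ℕ) (ha : a ≤ 1) (hb : b ≤ 1) : |(a : ℝ) - (b : ℝ)| ≤ 1 := by
  interval_cases a <;> interval_cases b <;> norm_num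

lemma word6_of_exp (ε : ℤ → ℕ) (hε : IsExpansion 0 ε) (k : ℕ) :
    IsWord6 (fun j => if j < 6 then ε ((k * 6 + j : ℕ) : ℤ) else 0) := by
  refine ⟨fun i => ?_, fun i hi => by simp [Nat.not_lt.mpr hi], fun i hi => ?_⟩
  · by_cases h : i < 6
    · simpa [h] using hε.1 ((k * 6 + i : ℕ) : ℤ)
    · simp [h]
  · obtain ⟨h0, h1, h2, h3⟩ := hi
    have hlt3 : i + 3 < 6 := by by_contra h; simp [h, Nat.not_lt.mpr (Nat.not_lt.mp h)] at h3
    have hi0 : i < 6 := by omega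
    have hi1 : i + 1 < 6 := by omega
    have hi2 : i + 2 < 6 := by omega
    simp only [if_pos hi0] at h0
    simp only [if_pos hi1] at h1
    simp only [if_pos hi2] at h2
    simp only [if_pos hlt3] at h3
    apply hε.2.2 ((k * 6 + i : ℕ) : ℤ)
    have e1 : ((k * 6 + i : ℕ) : ℤ) + 1 = ((k * 6 + (i + 1) : ℕ) : ℤ) := by push_cast; ring
    have e2 : ((k * 6 + i : ℕ) : ℤ) + 2 = ((k * 6 + (i + 2) : ℕ) : ℤ) := by push_cast; ring
    have e3 : ((k * 6 + i : ℕ) : ℤ) + 3 = ((k * 6 + (i + 3) : ℕ) : ℤ) := by push_cast; ring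
    rw [e1, e2, e3]
    exact ⟨h0, h1, h2, h3⟩

set_option maxHeartbeats 1000000 in
theorem expansion_difference_bounds (β β₂ : ℝ) (β₃ : ℂ)
    (hβ : 1 < β) (hβroot : β ^ 4 = β ^ 3 + β ^ 2 + β + 1)
    (hβ₂neg : -1 < β₂) (hβ₂pos : β₂ < 0)
    (hβ₂root : β₂ ^ 4 = β₂ ^ 3 + β₂ ^ 2 + β₂ + 1)
    (hβ₃abs : ‖β₃‖ < 1) (hβ₃im : β₃.im ≠ 0)
    (hβ₃root : β₃ ^ 4 = β₃ ^ 3 + β₃ ^ 2 + β₃ + 1)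
    (ε ε' : ℤ → ℕ) (hε : IsExpansion 0 ε) (hε' : IsExpansion 0 ε')
    (C : ℝ)
    (hC : IsGreatest { r : ℝ | ∃ c d : ℕ → ℕ, IsWord6 c ∧ IsWord6 d ∧
      r = ‖∑ i ∈ Finset.range 6, ((c i : ℂ) - (d i : ℂ)) * β₃ ^ i‖ } C) :
    |∑' i : ℕ, ((ε (i : ℤ) : ℝ) - (ε' (i : ℤ) : ℝ)) * β₂ ^ i| ≤ 1 / (1 + β₂) ∧
    ‖∑' i : ℕ, ((ε (i : ℤ) : ℂ) - (ε' (i : ℤ) : ℂ)) * β₃ ^ i‖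
      ≤ C / (1 - ‖β₃‖ ^ 6) := by
  constructor
  · -- real part
    set f : ℕ → ℝ := fun i => ((ε (i : ℤ) : ℝ) - (ε' (i : ℤ) : ℝ)) * β₂ ^ i with hf
    have hr0 : (0:ℝ) ≤ |β₂| := abs_nonneg _
    have hr1 : |β₂| < 1 := abs_lt.mpr ⟨hβ₂neg, lt_trans hβ₂pos one_pos⟩
    have hb : ∀ i : ℕ, ‖f i‖ ≤ |β₂| ^ i := by
      intro i
      have : ‖f i‖ = |((ε (i:ℤ):ℝ) - ε' (i:ℤ))| * |β₂|^i := by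
        rw [Real.norm_eq_abs, hf, abs_mul, abs_pow]
      rw [this]
      nlinarith [delta_abs_le (ε i) (ε' i) (hε.1 i) (hε'.1 i), pow_nonneg hr0 i,
        abs_nonneg ((ε (i:ℤ):ℝ) - ε' (i:ℤ))]
    have hsumg : Summable (fun i : ℕ => |β₂| ^ i) := summable_geometric_of_lt_one hr0 hr1
    have hsf : Summable f := Summable.of_norm_bounded hsumg hb
    have h1 : ‖∑' i, f i‖ ≤ ∑' i : ℕ, |β₂| ^ i :=
      (norm_tsum_le_tsum_norm hsf.norm).trans (Summable.tsum_le_tsum hb hsf.norm hsumg)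
    rw [tsum_geometric_of_lt_one hr0 hr1] at h1
    rw [Real.norm_eq_abs] at h1
    refine h1.trans (le_of_eq ?_)
    rw [abs_of_neg hβ₂pos]; ring
  · -- complex part
    set r : ℝ := ‖β₃‖ with hrdef
    have hr0 : (0:ℝ) ≤ r := norm_nonneg _
    set g : ℕ → ℂ := fun i => ((ε (i : ℤ) : ℂ) - (ε' (i : ℤ) : ℂ)) * β₃ ^ i with hg
    have hb : ∀ i : ℕ, ‖g i‖ ≤ r ^ i := by
      intro i
      have hcast : ((ε (i:ℤ) : ℂ) - (ε' (i:ℤ) : ℂ)) = (((ε (i:ℤ) : ℝ) - ε' (i:ℤ) : ℝ) : ℂ) := by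
        push_cast; ring
      have : ‖g i‖ = |((ε (i:ℤ):ℝ) - ε' (i:ℤ))| * r ^ i := by
        rw [hg]; simp only [norm_mul, norm_pow, hcast, Complex.norm_real, Real.norm_eq_abs,
          hrdef]
      rw [this]
      nlinarith [delta_abs_le (ε i) (ε' i) (hε.1 i) (hε'.1 i), pow_nonneg hr0 i,
        abs_nonneg ((ε (i:ℤ):ℝ) - ε' (i:ℤ))]
    have hsg : Summable g :=
      Summable.of_norm_bounded (summable_geometric_of_lt_one hr0 hβ₃abs) hb
    -- block sums
    set B : ℕ → ℂ := fun k => ∑ j ∈ Finset.range 6, g (k * 6 + j) with hB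
    have hkey : ∑' i : ℕ, g i = ∑' k : ℕ, B k := by
      have he : ∀ p : ℕ × Fin 6, (Nat.divModEquiv 6).symm p = p.1 * 6 + (p.2 : ℕ) :=
        fun p => rfl
      have hgs : Summable (fun p : ℕ × Fin 6 => g ((Nat.divModEquiv 6).symm p)) :=
        (Equiv.summable_iff _).mpr hsg
      calc ∑' i : ℕ, g i = ∑' p : ℕ × Fin 6, g ((Nat.divModEquiv 6).symm p) :=
            ((Nat.divModEquiv 6).symm.tsum_eq g).symm
        _ = ∑' (k : ℕ) (j : Fin 6), g ((Nat.divModEquiv 6).symm (k, j)) :=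
            Summable.tsum_prod' hgs (fun b => Summable.of_finite)
        _ = ∑' k, B k := by
            refine tsum_congr fun k => ?_
            rw [tsum_fintype, hB]
            simp only [he]
            exact Fin.sum_univ_eq_sum_range (fun j => g (k * 6 + j)) 6
    have hr6 : r ^ 6 < 1 := pow_lt_one₀ hr0 hβ₃abs (by norm_num)
    have hBbound : ∀ k : ℕ, ‖B k‖ ≤ C * (r ^ 6) ^ k := by
      intro k
      have hfac : B k = β₃ ^ (6 * k) *
          ∑ j ∈ Finset.range 6, ((ε ((k * 6 + j : ℕ) : ℤ) : ℂ) - ε' ((k * 6 + j : ℕ) : ℤ)) * β₃ ^ j := by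
        rw [hB, Finset.mul_sum]
        refine Finset.sum_congr rfl fun j _ => ?_
        simp only [hg]
        have hp : β₃ ^ (k * 6 + j) = β₃ ^ (6 * k) * β₃ ^ j := by rw [← pow_add]; ring_nf
        rw [hp]; ring
      have hSC : ‖∑ j ∈ Finset.range 6,
          ((ε ((k * 6 + j : ℕ) : ℤ) : ℂ) - ε' ((k * 6 + j : ℕ) : ℤ)) * β₃ ^ j‖ ≤ C := by
        apply hC.2
        refine ⟨fun j => if j < 6 then ε ((k * 6 + j : ℕ) : ℤ) else 0,
          fun j => if j < 6 then ε' ((k * 6 + j : ℕ) : ℤ) else 0,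
          word6_of_exp ε hε k, word6_of_exp ε' hε' k, ?_⟩
        refine congrArg _ (Finset.sum_congr rfl fun j hj => ?_)
        rw [Finset.mem_range] at hj
        simp [hj]
      calc ‖B k‖ = r ^ (6 * k) * ‖∑ j ∈ Finset.range 6,
            ((ε ((k * 6 + j : ℕ) : ℤ) : ℂ) - ε' ((k * 6 + j : ℕ) : ℤ)) * β₃ ^ j‖ := by
            rw [hfac]; simp [map_mul, map_pow, hrdef]
        _ ≤ r ^ (6 * k) * C := by
            exact mul_le_mul_of_nonneg_left hSC (pow_nonneg hr0 _)
        _ = C * (r ^ 6) ^ k := by rw [← pow_mul]; ring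
    have hsum2 : Summable (fun k : ℕ => C * (r ^ 6) ^ k) :=
      (summable_geometric_of_lt_one (pow_nonneg hr0 6) hr6).mul_left C
    have hsB : Summable (fun k => ‖B k‖) :=
      Summable.of_nonneg_of_le (fun k => norm_nonneg _) hBbound hsum2
    calc ‖∑' i : ℕ, g i‖ = ‖∑' k, B k‖ := by rw [hkey]
      _ ≤ ∑' k, ‖B k‖ := norm_tsum_le_tsum_norm hsB
      _ ≤ ∑' k : ℕ, C * (r ^ 6) ^ k := Summable.tsum_le_tsum hBbound hsB hsum2
      _ = C * (1 - r ^ 6)⁻¹ := by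
            rw [tsum_mul_left, tsum_geometric_of_lt_one (pow_nonneg hr0 6) hr6]
      _ = C / (1 - r ^ 6) := by ring
end
end

section
/- Let x = Σ_{i=l}^∞ ε_i αⁱ and y = Σ_{i=l}^∞ ε'_i αⁱ, where ε=(ε_i)_{i≥l} and ε'=(ε'_i)_{i≥l} belong to 𝒟^∞. Then x = y if and only if the set S(ε,ε') = { A_k(ε,ε') : k ≥ l } is finite. -/
open MeasureTheory

noncomputable section
namespace EqIffAux

lemma fst_zpow {M N : Type*} [DivisionMonoid M] [DivisionMonoid N] (p : M × N) (n : ℤ) :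
    (p ^ n).1 = p.1 ^ n := by
  cases n with
  | ofNat m => simp [zpow_natCast]
  | negSucc m => simp [zpow_negSucc]

lemma snd_zpow {M N : Type*} [DivisionMonoid M] [DivisionMonoid N] (p : M × N) (n : ℤ) :
    (p ^ n).2 = p.2 ^ n := by
  cases n with
  | ofNat m => simp [zpow_natCast]
  | negSucc m => simp [zpow_negSucc]

lemma sum_Icc_eq_range {M : Type*} [AddCommMonoid M] (f : ℤ → M) (l k : ℤ) :
    ∑ i ∈ Finset.Icc l k, f i = ∑ i ∈ Finset.range (k + 1 - l).toNat, f (l + i) := by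
  apply Finset.sum_nbij' (i := fun a => (a - l).toNat) (j := fun n => l + (n : ℤ))
  · intro a ha; simp only [Finset.mem_Icc] at ha; simp; omega
  · intro n hn; simp only [Finset.mem_range] at hn; simp only [Finset.mem_Icc]; omega
  · intro a ha; simp only [Finset.mem_Icc] at ha; omega
  · intro n hn; simp only [Finset.mem_range] at hn; omega
  · intro a ha; simp only [Finset.mem_Icc] at ha; congr 1; omega

lemma hasSum_shift {f : ℤ → ℂ} {l : ℤ} (hsupp : ∀ i, i < l → f i = 0) {c : ℂ}
    (h : HasSum f c) : HasSum (fun n : ℕ => f (l + n)) c := by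
  have hinj : Function.Injective (fun n : ℕ => l + (n : ℤ)) := fun a b h => by
    simpa using h
  have := (Function.Injective.hasSum_iff hinj (f := f) ?_).2 h
  · exact this
  · intro x hx
    apply hsupp
    by_contra hlt
    exact hx ⟨(x - l).toNat, by simp; omega⟩


set_option maxHeartbeats 1000000 in
lemma tail_bound {l : ℤ} {r : ℂ} (hr0 : r ≠ 0) (hr1 : ‖r‖ < 1) (d : ℤ → ℤ)
    (hd : ∀ i, |d i| ≤ 1) (hdl : ∀ i, i < l → d i = 0)
    (hsum : HasSum (fun i : ℤ => (d i : ℂ) * r ^ i) 0) {k : ℤ} (hk : l ≤ k) :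
    ‖r ^ (3 - k) * ∑ i ∈ Finset.Icc l k, (d i : ℂ) * r ^ i‖ ≤ ‖r‖ ^ (4 : ℕ) / (1 - ‖r‖) := by
  have hr0' : (0:ℝ) < ‖r‖ := norm_pos_iff.2 hr0
  set m := (k + 1 - l).toNat with hm
  have hml : l + (m : ℤ) = k + 1 := by omega
  set g : ℕ → ℂ := fun n => (d (l + n) : ℂ) * r ^ (l + (n : ℤ)) with hg
  have hgs : HasSum g 0 := hasSum_shift (fun i hi => by simp [hdl i hi]) hsum
  have hpart : ∑ i ∈ Finset.Icc l k, (d i : ℂ) * r ^ i = ∑ n ∈ Finset.range m, g n :=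
    sum_Icc_eq_range _ l k
  have htail : ∑ n ∈ Finset.range m, g n = -∑' n : ℕ, g (n + m) := by
    have h2 := Summable.sum_add_tsum_nat_add (f := g) m hgs.summable
    rw [hgs.tsum_eq] at h2
    exact eq_neg_of_add_eq_zero_left h2
  have hb : ∀ n : ℕ, ‖g (n + m)‖ ≤ ‖r‖ ^ (k + 1 : ℤ) * ‖r‖ ^ n := by
    intro n
    have h1 : ‖g (n + m)‖ = ‖(d (l + ((n : ℤ) + m)) : ℂ)‖ * ‖r‖ ^ (l + ((n:ℤ) + m)) := by
      simp [hg, norm_mul, norm_zpow]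
    rw [h1]
    have h2 : ‖(d (l + ((n : ℤ) + m)) : ℂ)‖ ≤ 1 := by
      rw [Complex.norm_intCast]
      exact_mod_cast hd _
    have h3 : ‖r‖ ^ (l + ((n:ℤ) + m)) = ‖r‖ ^ (k + 1 : ℤ) * ‖r‖ ^ n := by
      rw [show l + ((n:ℤ) + m) = (k + 1) + (n:ℤ) by omega, zpow_add₀ (ne_of_gt hr0'),
        zpow_natCast]
    rw [h3]
    exact mul_le_of_le_one_left
      (mul_nonneg (zpow_nonneg hr0'.le _) (pow_nonneg hr0'.le _)) h2
  have hsumm2 : Summable (fun n : ℕ => ‖r‖ ^ (k + 1 : ℤ) * ‖r‖ ^ n) :=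
    (summable_geometric_of_lt_one hr0'.le hr1).mul_left _
  have hsumm1 : Summable (fun n : ℕ => ‖g (n + m)‖) :=
    hsumm2.of_nonneg_of_le (fun n => norm_nonneg _) hb
  have hbound : ‖∑ n ∈ Finset.range m, g n‖ ≤ ‖r‖ ^ (k + 1 : ℤ) * (1 - ‖r‖)⁻¹ := by
    rw [htail, norm_neg]
    calc ‖∑' n : ℕ, g (n + m)‖ ≤ ∑' n : ℕ, ‖g (n + m)‖ := norm_tsum_le_tsum_norm hsumm1
      _ ≤ ∑' n : ℕ, ‖r‖ ^ (k + 1 : ℤ) * ‖r‖ ^ n := Summable.tsum_le_tsum hb hsumm1 hsumm2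
      _ = ‖r‖ ^ (k + 1 : ℤ) * (1 - ‖r‖)⁻¹ := by
          rw [tsum_mul_left, tsum_geometric_of_lt_one hr0'.le hr1]
  calc ‖r ^ (3 - k) * ∑ i ∈ Finset.Icc l k, (d i : ℂ) * r ^ i‖
      = ‖r‖ ^ (3 - k : ℤ) * ‖∑ n ∈ Finset.range m, g n‖ := by
        rw [norm_mul, norm_zpow, hpart]
    _ ≤ ‖r‖ ^ (3 - k : ℤ) * (‖r‖ ^ (k + 1 : ℤ) * (1 - ‖r‖)⁻¹) :=
        mul_le_mul_of_nonneg_left hbound (zpow_nonneg hr0'.le _)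
    _ = ‖r‖ ^ (4 : ℕ) / (1 - ‖r‖) := by
        rw [← mul_assoc, ← zpow_add₀ (ne_of_gt hr0'), show (3 - k) + (k + 1) = (4:ℤ) by ring,
          div_eq_mul_inv]
        norm_cast


set_option maxHeartbeats 1000000 in
lemma unbounded {l : ℤ} {r : ℂ} (hr0 : r ≠ 0) (hr1 : ‖r‖ < 1) (d : ℤ → ℤ)
    (hdl : ∀ i, i < l → d i = 0) {w : ℂ}
    (hsum : HasSum (fun i : ℤ => (d i : ℂ) * r ^ i) w) (hw : w ≠ 0) (C : ℝ) :
    ∃ k, l ≤ k ∧ C < ‖r ^ (3 - k) * ∑ i ∈ Finset.Icc l k, (d i : ℂ) * r ^ i‖ := by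
  have hr0' : (0:ℝ) < ‖r‖ := norm_pos_iff.2 hr0
  set g : ℕ → ℂ := fun n => (d (l + n) : ℂ) * r ^ (l + (n : ℤ)) with hg
  have hgs : HasSum g w := hasSum_shift (fun i hi => by simp [hdl i hi]) hsum
  have htend := hgs.tendsto_sum_nat
  have hw2 : (0:ℝ) < ‖w‖ / 2 := by
    have : (0:ℝ) < ‖w‖ := norm_pos_iff.2 hw
    linarith
  have hev1 : ∀ᶠ m : ℕ in Filter.atTop, ‖w‖ / 2 ≤ ‖∑ n ∈ Finset.range m, g n‖ := by
    have hball := htend.eventually (Metric.ball_mem_nhds w hw2)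
    filter_upwards [hball] with m hm
    have h1 : ‖∑ n ∈ Finset.range m, g n - w‖ < ‖w‖ / 2 := by
      simpa [dist_eq_norm] using hm
    have h2 := norm_sub_norm_le (∑ n ∈ Finset.range m, g n) w
    have h3 := abs_le.1 (abs_norm_sub_norm_le (∑ n ∈ Finset.range m, g n) w)
    linarith [h3.1]
  have hc : (0:ℝ) < ‖r‖ ^ (4 - l : ℤ) * (‖w‖ / 2) :=
    mul_pos (zpow_pos hr0' _) hw2
  have hinv : (1:ℝ) < ‖r‖⁻¹ := (one_lt_inv₀ hr0').2 hr1
  have htend2 : Filter.Tendsto (fun m : ℕ => ‖r‖ ^ (4 - l : ℤ) * (‖w‖ / 2) * (‖r‖⁻¹) ^ m)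
      Filter.atTop Filter.atTop :=
    (tendsto_pow_atTop_atTop_of_one_lt hinv).const_mul_atTop hc
  have hev2 := htend2.eventually_gt_atTop C
  obtain ⟨m, hm⟩ := ((hev1.and hev2).and (Filter.eventually_ge_atTop 1)).exists
  obtain ⟨⟨hm1, hm2⟩, hm3⟩ := hm
  refine ⟨l + m - 1, by omega, ?_⟩
  have hpart : ∑ i ∈ Finset.Icc l (l + m - 1), (d i : ℂ) * r ^ i
      = ∑ n ∈ Finset.range m, g n := by
    rw [sum_Icc_eq_range (fun i => (d i : ℂ) * r ^ i) l (l + m - 1),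
      show (l + (m:ℤ) - 1 + 1 - l).toNat = m by omega]
  have hexp : ‖r‖ ^ (3 - (l + (m:ℤ) - 1) : ℤ) = ‖r‖ ^ (4 - l : ℤ) * (‖r‖⁻¹) ^ m := by
    rw [show (3 - (l + (m:ℤ) - 1) : ℤ) = (4 - l) + (-(m:ℤ)) by ring,
      zpow_add₀ (ne_of_gt hr0'), zpow_neg, zpow_natCast, inv_pow]
  calc C < ‖r‖ ^ (4 - l : ℤ) * (‖w‖ / 2) * (‖r‖⁻¹) ^ m := hm2
    _ = ‖r‖ ^ (3 - (l + (m:ℤ) - 1) : ℤ) * (‖w‖ / 2) := by rw [hexp]; ring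
    _ ≤ ‖r‖ ^ (3 - (l + (m:ℤ) - 1) : ℤ) * ‖∑ n ∈ Finset.range m, g n‖ :=
        mul_le_mul_of_nonneg_left hm1 (zpow_nonneg hr0'.le _)
    _ = ‖r ^ (3 - (l + (m:ℤ) - 1)) * ∑ i ∈ Finset.Icc l (l + m - 1), (d i : ℂ) * r ^ i‖ := by
        rw [norm_mul, norm_zpow, hpart]


def Umap (c : Fin 4 → ℤ) : Fin 4 → ℤ := ![c 3, c 0 + c 3, c 1 + c 3, c 2 + c 3]
def Dmap (c : Fin 4 → ℤ) : Fin 4 → ℤ := ![c 1 - c 0, c 2 - c 0, c 3 - c 0, c 0]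
def e0 : Fin 4 → ℤ := ![1, 0, 0, 0]
def Rvec (m : ℤ) : Fin 4 → ℤ :=
  if 0 ≤ m then Umap^[m.toNat] e0 else Dmap^[(-m).toNat] e0

def evc (r : ℂ) (c : Fin 4 → ℤ) : ℂ := ∑ j : Fin 4, (c j : ℂ) * r ^ (j : ℕ)

lemma evc_Umap {r : ℂ} (hr : r ^ 4 = r ^ 3 + r ^ 2 + r + 1) (c : Fin 4 → ℤ) :
    evc r (Umap c) = r * evc r c := by
  simp only [evc, Umap, Fin.sum_univ_four]
  simp only [Matrix.cons_val_zero, Matrix.cons_val_one, Matrix.head_cons,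
    Matrix.cons_val_two, Matrix.tail_cons, Matrix.cons_val_three,
    show ((0:Fin 4):ℕ) = 0 from rfl, show ((1:Fin 4):ℕ) = 1 from rfl,
    show ((2:Fin 4):ℕ) = 2 from rfl, show ((3:Fin 4):ℕ) = 3 from rfl]
  push_cast
  linear_combination (-(c 3 : ℂ)) * hr

lemma evc_Dmap {r : ℂ} (hr : r ^ 4 = r ^ 3 + r ^ 2 + r + 1) (c : Fin 4 → ℤ) :
    r * evc r (Dmap c) = evc r c := by
  simp only [evc, Dmap, Fin.sum_univ_four]
  simp only [Matrix.cons_val_zero, Matrix.cons_val_one, Matrix.head_cons,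
    Matrix.cons_val_two, Matrix.tail_cons, Matrix.cons_val_three,
    show ((0:Fin 4):ℕ) = 0 from rfl, show ((1:Fin 4):ℕ) = 1 from rfl,
    show ((2:Fin 4):ℕ) = 2 from rfl, show ((3:Fin 4):ℕ) = 3 from rfl]
  push_cast
  linear_combination (c 0 : ℂ) * hr

lemma evc_e0 (r : ℂ) : evc r e0 = 1 := by
  simp [evc, e0, Fin.sum_univ_four]

lemma evc_Rvec {r : ℂ} (hr0 : r ≠ 0) (hr : r ^ 4 = r ^ 3 + r ^ 2 + r + 1) (m : ℤ) :
    evc r (Rvec m) = r ^ m := by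
  have hU : ∀ n : ℕ, evc r (Umap^[n] e0) = r ^ n := by
    intro n
    induction n with
    | zero => simp [evc_e0]
    | succ n ih => rw [Function.iterate_succ_apply', evc_Umap hr, ih, pow_succ]; ring
  have hD : ∀ n : ℕ, r ^ n * evc r (Dmap^[n] e0) = 1 := by
    intro n
    induction n with
    | zero => simp [evc_e0]
    | succ n ih =>
        rw [Function.iterate_succ_apply', pow_succ]
        calc r ^ n * r * evc r (Dmap (Dmap^[n] e0))
            = r ^ n * (r * evc r (Dmap (Dmap^[n] e0))) := by ring
          _ = r ^ n * evc r (Dmap^[n] e0) := by rw [evc_Dmap hr]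
          _ = 1 := ih
  unfold Rvec
  by_cases hm : 0 ≤ m
  · rw [if_pos hm, hU, ← zpow_natCast, Int.toNat_of_nonneg hm]
  · rw [if_neg hm]
    have h1 := hD (-m).toNat
    have h2 : r ^ m = (r ^ (-m).toNat)⁻¹ := by
      rw [← zpow_natCast, ← zpow_neg]
      congr 1
      omega
    rw [h2]
    exact eq_inv_of_mul_eq_one_left (by rw [mul_comm] at h1; exact h1)


lemma evc_sum {l k : ℤ} (d : ℤ → ℤ) {r : ℂ} (hr0 : r ≠ 0)
    (hr : r ^ 4 = r ^ 3 + r ^ 2 + r + 1) :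
    evc r (fun j => ∑ i ∈ Finset.Icc l k, d i * Rvec (i + 3 - k) j)
      = r ^ (3 - k) * ∑ i ∈ Finset.Icc l k, (d i : ℂ) * r ^ i := by
  calc evc r (fun j => ∑ i ∈ Finset.Icc l k, d i * Rvec (i + 3 - k) j)
      = ∑ i ∈ Finset.Icc l k, (d i : ℂ) * evc r (Rvec (i + 3 - k)) := by
        unfold evc
        simp only [Int.cast_sum, Int.cast_mul, Finset.sum_mul]
        rw [Finset.sum_comm]
        refine Finset.sum_congr rfl fun i _ => ?_
        rw [Finset.mul_sum]
        refine Finset.sum_congr rfl fun j _ => ?_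
        ring
    _ = ∑ i ∈ Finset.Icc l k, (d i : ℂ) * r ^ (i + 3 - k) := by
        refine Finset.sum_congr rfl fun i _ => ?_
        rw [evc_Rvec hr0 hr]
    _ = r ^ (3 - k) * ∑ i ∈ Finset.Icc l k, (d i : ℂ) * r ^ i := by
        rw [Finset.mul_sum]
        refine Finset.sum_congr rfl fun i _ => ?_
        rw [show i + 3 - k = (3 - k) + i by ring, zpow_add₀ hr0]
        ring

lemma coeff_bound (v : Fin 4 → ℂ) (hv : Function.Injective v) (B : ℝ) (hB : 0 ≤ B) :
    ∃ N : ℤ, ∀ c : Fin 4 → ℤ,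
      (∀ i, ‖∑ j : Fin 4, (c j : ℂ) * v i ^ (j : ℕ)‖ ≤ B) →
      ∀ j, -N ≤ c j ∧ c j ≤ N := by
  set V := Matrix.vandermonde v with hV
  have hdet : V.det ≠ 0 := by
    rw [Matrix.det_vandermonde]
    refine Finset.prod_ne_zero_iff.2 fun i _ => Finset.prod_ne_zero_iff.2 fun j hj => ?_
    rw [Finset.mem_Ioi] at hj
    exact sub_ne_zero_of_ne fun h => (ne_of_lt hj) (hv h.symm)
  set W := V⁻¹ with hW
  have hWV : W * V = 1 := Matrix.nonsing_inv_mul V (isUnit_iff_ne_zero.2 hdet)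
  set KK : ℝ := ∑ j : Fin 4, ∑ i : Fin 4, ‖W j i‖ with hKK
  refine ⟨⌈KK * B⌉, fun c hc j => ?_⟩
  have hu : ∀ i, (V.mulVec (fun j => (c j : ℂ))) i = ∑ j : Fin 4, (c j : ℂ) * v i ^ (j : ℕ) := by
    intro i
    simp only [Matrix.mulVec, dotProduct, hV, Matrix.vandermonde_apply]
    exact Finset.sum_congr rfl fun j _ => mul_comm _ _
  have hcj : (fun j => (c j : ℂ)) = W.mulVec (V.mulVec (fun j => (c j : ℂ))) := by
    rw [Matrix.mulVec_mulVec, hWV, Matrix.one_mulVec]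
  have hbound : |(c j : ℝ)| ≤ KK * B := by
    have h1 : ((c j : ℂ)) = ∑ i : Fin 4, W j i * (V.mulVec (fun j => (c j : ℂ))) i := by
      conv_lhs => rw [show ((c j : ℂ)) = (fun j => (c j : ℂ)) j from rfl, hcj]
      rfl
    have h2 : ‖(c j : ℂ)‖ ≤ ∑ i : Fin 4, ‖W j i‖ * B := by
      rw [h1]
      refine (norm_sum_le _ _).trans (Finset.sum_le_sum fun i _ => ?_)
      rw [norm_mul, hu]
      exact mul_le_mul_of_nonneg_left (hc i) (norm_nonneg _)
    have h3 : ∑ i : Fin 4, ‖W j i‖ * B ≤ KK * B := by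
      rw [← Finset.sum_mul]
      refine mul_le_mul_of_nonneg_right ?_ hB
      exact Finset.single_le_sum (f := fun j => ∑ i : Fin 4, ‖W j i‖)
        (fun a _ => Finset.sum_nonneg fun i _ => norm_nonneg _) (Finset.mem_univ j)
    have h4 : ‖(c j : ℂ)‖ = |(c j : ℝ)| := by
      rw [show ((c j : ℂ)) = ((c j : ℝ) : ℂ) by norm_cast, Complex.norm_real, Real.norm_eq_abs]
    rw [← h4]
    exact h2.trans h3
  have h5 := hbound.trans (Int.le_ceil (KK * B))
  rw [abs_le] at h5
  constructor
  · exact_mod_cast h5.1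
  · exact_mod_cast h5.2


lemma evc_conj (r : ℂ) (c : Fin 4 → ℤ) :
    evc ((starRingEnd ℂ) r) c = (starRingEnd ℂ) (evc r c) := by
  unfold evc
  rw [map_sum]
  exact Finset.sum_congr rfl fun j _ => by rw [map_mul, map_pow, map_intCast]

lemma geom_Icc_bound {b : ℝ} (hb : 1 < b) (l : ℤ) :
    ∀ k : ℤ, l ≤ k → ∑ i ∈ Finset.Icc l k, b ^ i ≤ b ^ (k + 1) / (b - 1) := by
  have hb0 : (0:ℝ) < b := by linarith
  have hb1 : b - 1 ≠ 0 := by intro h; rw [sub_eq_zero] at h; exact absurd h.symm (ne_of_lt hb)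
  have key : ∀ n : ℕ, ∑ i ∈ Finset.Icc l (l + (n:ℤ)), b ^ i ≤ b ^ (l + (n:ℤ) + 1) / (b - 1) := by
    intro n
    induction n with
    | zero =>
        simp only [Nat.cast_zero, add_zero, Finset.Icc_self, Finset.sum_singleton]
        rw [le_div_iff₀ (by linarith), zpow_add_one₀ (ne_of_gt hb0)]
        have := zpow_pos hb0 l
        nlinarith
    | succ n ih =>
        have hins : Finset.Icc l (l + (n:ℤ) + 1) = insert (l + (n:ℤ) + 1)
            (Finset.Icc l (l + (n:ℤ))) := by
          ext j; simp only [Finset.mem_Icc, Finset.mem_insert]; omega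
        push_cast
        rw [show l + ((n:ℤ) + 1) = l + (n:ℤ) + 1 by ring, hins, Finset.sum_insert (by simp)]
        have hpow : b ^ (l + (n:ℤ) + 1 + 1) = b ^ (l + (n:ℤ) + 1) * b :=
          zpow_add_one₀ (ne_of_gt hb0) _
        have h2 : b ^ (l+(n:ℤ)+1) / (b-1) + b ^ (l+(n:ℤ)+1) = b ^ (l+(n:ℤ)+1) * b / (b-1) := by
          field_simp
          ring
        rw [hpow]
        linarith
  intro k hk
  have := key (k - l).toNat
  rw [show l + (((k - l).toNat : ℕ) : ℤ) = k by omega] at this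
  exact this

lemma beta_bound {l k : ℤ} (hk : l ≤ k) {b : ℝ} (hb : 1 < b) (d : ℤ → ℤ)
    (hd : ∀ i, |d i| ≤ 1) :
    ‖(b : ℂ) ^ (3 - k) * ∑ i ∈ Finset.Icc l k, (d i : ℂ) * (b : ℂ) ^ i‖
      ≤ b ^ (4 : ℕ) / (b - 1) := by
  have hb0 : (0:ℝ) < b := by linarith
  have hnb : ‖(b : ℂ)‖ = b := by rw [Complex.norm_real, Real.norm_eq_abs, abs_of_pos hb0]
  have hsum : ‖∑ i ∈ Finset.Icc l k, (d i : ℂ) * (b : ℂ) ^ i‖ ≤ b ^ (k + 1) / (b - 1) := by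
    refine (norm_sum_le _ _).trans ?_
    refine le_trans (Finset.sum_le_sum (g := fun i => b ^ i) fun i _ => ?_)
      (geom_Icc_bound hb l k hk)
    rw [norm_mul, norm_zpow, hnb]
    have h2 : ‖((d i : ℤ) : ℂ)‖ ≤ 1 := by
      rw [Complex.norm_intCast]
      exact_mod_cast hd i
    have := zpow_pos hb0 i
    nlinarith [zpow_nonneg hb0.le i]
  calc ‖(b : ℂ) ^ (3 - k) * ∑ i ∈ Finset.Icc l k, (d i : ℂ) * (b : ℂ) ^ i‖
      = b ^ (3 - k : ℤ) * ‖∑ i ∈ Finset.Icc l k, (d i : ℂ) * (b : ℂ) ^ i‖ := by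
        rw [norm_mul, norm_zpow, hnb]
    _ ≤ b ^ (3 - k : ℤ) * (b ^ (k + 1) / (b - 1)) :=
        mul_le_mul_of_nonneg_left hsum (zpow_nonneg hb0.le _)
    _ = b ^ (4 : ℕ) / (b - 1) := by
        rw [div_eq_mul_inv, div_eq_mul_inv, ← mul_assoc, ← zpow_add₀ (ne_of_gt hb0),
          show (3 - k) + (k + 1) = (4:ℤ) by ring]
        norm_cast

end EqIffAux

/-- `A_k(ε,ε') = α^{3-k} Σ_{i=l}^k (ε_i - ε'_i) α^i`. -/
def Adig (α : ℝ × ℂ) (l : ℤ) (ε ε' : ℤ → ℕ) (k : ℤ) : ℝ × ℂ :=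
  α ^ (3 - k) * ∑ i ∈ Finset.Icc l k, ((ε i : ℝ × ℂ) - (ε' i : ℝ × ℂ)) * α ^ i

open EqIffAux in
set_option maxHeartbeats 2000000 in
theorem eq_iff_Sset_finite (β β₂ : ℝ) (β₃ : ℂ)
    (hβ : 1 < β) (hβroot : β ^ 4 = β ^ 3 + β ^ 2 + β + 1)
    (hβ₂neg : -1 < β₂) (hβ₂pos : β₂ < 0)
    (hβ₂root : β₂ ^ 4 = β₂ ^ 3 + β₂ ^ 2 + β₂ + 1)
    (hβ₃abs : ‖β₃‖ < 1) (hβ₃im : β₃.im ≠ 0)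
    (hβ₃root : β₃ ^ 4 = β₃ ^ 3 + β₃ ^ 2 + β₃ + 1)
    (α : ℝ × ℂ) (hα : α = (β₂, β₃))
    (l : ℤ) (ε ε' : ℤ → ℕ) (hε : IsExpansion l ε) (hε' : IsExpansion l ε')
    (x y : ℝ × ℂ) (hx : ExpSum α ε x) (hy : ExpSum α ε' y) :
    x = y ↔ Set.Finite { s | ∃ k ≥ l, s = Adig α l ε ε' k } := by
  subst hα
  set d : ℤ → ℤ := fun i => (ε i : ℤ) - (ε' i : ℤ) with hd
  have hd1 : ∀ i, |d i| ≤ 1 := by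
    intro i
    have h1 := hε.1 i
    have h2 := hε'.1 i
    simp only [hd]
    rw [abs_le]
    omega
  have hdl : ∀ i, i < l → d i = 0 := by
    intro i hi
    simp only [hd, hε.2.1 i hi, hε'.2.1 i hi, Nat.cast_zero, sub_zero]
  -- basic facts about the roots
  have hβ₂C0 : ((β₂ : ℂ)) ≠ 0 := by
    simp only [ne_eq, Complex.ofReal_eq_zero]
    exact ne_of_lt hβ₂pos
  have hβ₂n : ‖(β₂ : ℂ)‖ = |β₂| := by rw [Complex.norm_real, Real.norm_eq_abs]
  have hβ₂n1 : ‖(β₂ : ℂ)‖ < 1 := by rw [hβ₂n, abs_lt]; constructor <;> linarith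
  have hβ₃0 : β₃ ≠ 0 := by
    intro h
    exact hβ₃im (by rw [h]; simp)
  have hβ₃n1 : ‖β₃‖ < 1 := by exact hβ₃abs
  have hβC0 : ((β : ℂ)) ≠ 0 := by
    simp only [ne_eq, Complex.ofReal_eq_zero]
    intro h; rw [h] at hβ; linarith
  have hβrootC : (β : ℂ) ^ 4 = (β : ℂ) ^ 3 + (β : ℂ) ^ 2 + (β : ℂ) + 1 := by
    exact_mod_cast hβroot
  have hβ₂rootC : (β₂ : ℂ) ^ 4 = (β₂ : ℂ) ^ 3 + (β₂ : ℂ) ^ 2 + (β₂ : ℂ) + 1 := by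
    exact_mod_cast hβ₂root
  -- the difference series
  have hxy : HasSum (fun i : ℤ => ((d i : ℝ × ℂ)) * ((β₂ : ℝ), β₃) ^ i) (x - y) := by
    have h0 := hx.sub hy
    have heq : (fun i : ℤ => (ε i : ℝ × ℂ) * ((β₂ : ℝ), β₃) ^ i
        - (ε' i : ℝ × ℂ) * ((β₂ : ℝ), β₃) ^ i)
        = fun i : ℤ => ((d i : ℝ × ℂ)) * ((β₂ : ℝ), β₃) ^ i := by
      funext i
      rw [← sub_mul]
      congr 1
      push_cast [hd]
      ring
    rw [heq] at h0
    exact h0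
  have h1sum : HasSum (fun i : ℤ => (d i : ℝ) * β₂ ^ i) (x - y).1 := by
    have h0 : HasSum (fun i : ℤ => (RingHom.fst ℝ ℂ) (((d i : ℝ × ℂ)) * ((β₂ : ℝ), β₃) ^ i))
        ((x - y).1) := hxy.map (RingHom.fst ℝ ℂ) continuous_fst
    have heq : (fun i : ℤ => (RingHom.fst ℝ ℂ) (((d i : ℝ × ℂ)) * ((β₂ : ℝ), β₃) ^ i))
        = fun i : ℤ => (d i : ℝ) * β₂ ^ i := by
      funext i
      simp only [RingHom.coe_fst, Prod.fst_mul, fst_zpow, Prod.fst_intCast]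
    rwa [heq] at h0
  have h2sum : HasSum (fun i : ℤ => (d i : ℂ) * β₃ ^ i) (x - y).2 := by
    have h0 : HasSum (fun i : ℤ => (RingHom.snd ℝ ℂ) (((d i : ℝ × ℂ)) * ((β₂ : ℝ), β₃) ^ i))
        ((x - y).2) := hxy.map (RingHom.snd ℝ ℂ) continuous_snd
    have heq : (fun i : ℤ => (RingHom.snd ℝ ℂ) (((d i : ℝ × ℂ)) * ((β₂ : ℝ), β₃) ^ i))
        = fun i : ℤ => (d i : ℂ) * β₃ ^ i := by
      funext i
      simp only [RingHom.coe_snd, Prod.snd_mul, snd_zpow, Prod.snd_intCast]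
    rwa [heq] at h0
  have h1sumC : HasSum (fun i : ℤ => (d i : ℂ) * (β₂ : ℂ) ^ i) (((x - y).1 : ℝ) : ℂ) := by
    have h0 : HasSum (fun i : ℤ => Complex.ofRealHom ((d i : ℝ) * β₂ ^ i))
        (((x - y).1 : ℝ) : ℂ) := h1sum.map Complex.ofRealHom Complex.continuous_ofReal
    have heq : (fun i : ℤ => Complex.ofRealHom ((d i : ℝ) * β₂ ^ i))
        = fun i : ℤ => (d i : ℂ) * (β₂ : ℂ) ^ i := by
      funext i
      simp only [Complex.ofRealHom_eq_coe, Complex.ofReal_mul, Complex.ofReal_zpow,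
        Complex.ofReal_intCast]
    rwa [heq] at h0
  -- componentwise description of Adig
  have hAd : ∀ k : ℤ, Adig ((β₂ : ℝ), β₃) l ε ε' k =
      ((β₂ ^ (3 - k) * ∑ i ∈ Finset.Icc l k, (d i : ℝ) * β₂ ^ i : ℝ),
       (β₃ ^ (3 - k) * ∑ i ∈ Finset.Icc l k, (d i : ℂ) * β₃ ^ i : ℂ)) := by
    intro k
    unfold Adig
    have hterm : ∀ i : ℤ, ((ε i : ℝ × ℂ) - (ε' i : ℝ × ℂ)) * ((β₂ : ℝ), β₃) ^ i
        = (((d i : ℝ) * β₂ ^ i : ℝ), ((d i : ℂ) * β₃ ^ i : ℂ)) := by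
      intro i
      apply Prod.ext
      · simp only [Prod.fst_mul, Prod.fst_sub, fst_zpow, Prod.fst_natCast]
        push_cast [hd]
        ring
      · simp only [Prod.snd_mul, Prod.snd_sub, snd_zpow, Prod.snd_natCast]
        push_cast [hd]
        ring
    rw [Finset.sum_congr rfl fun i _ => hterm i]
    apply Prod.ext
    · simp only [Prod.fst_mul, fst_zpow, Prod.fst_sum]
    · simp only [Prod.snd_mul, snd_zpow, Prod.snd_sum]
  constructor
  · -- x = y → finite
    intro hxyeq
    have hzero : x - y = 0 := sub_eq_zero_of_eq hxyeq
    have h1sum0 : HasSum (fun i : ℤ => (d i : ℂ) * (β₂ : ℂ) ^ i) 0 := by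
      rw [hzero] at h1sumC
      simpa using h1sumC
    have h2sum0 : HasSum (fun i : ℤ => (d i : ℂ) * β₃ ^ i) 0 := by
      rw [hzero] at h2sum
      simpa using h2sum
    -- bound
    set B₁ : ℝ := β ^ (4:ℕ) / (β - 1) with hB₁
    set B₂ : ℝ := ‖(β₂ : ℂ)‖ ^ (4:ℕ) / (1 - ‖(β₂ : ℂ)‖) with hB₂
    set B₃ : ℝ := ‖β₃‖ ^ (4:ℕ) / (1 - ‖β₃‖) with hB₃
    set B : ℝ := max (max B₁ B₂) B₃ with hB
    have hB₁0 : 0 ≤ B₁ := by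
      apply div_nonneg (by positivity)
      linarith
    have hB0 : 0 ≤ B := le_trans hB₁0 (le_trans (le_max_left _ _) (le_max_left _ _))
    set v : Fin 4 → ℂ := ![(β : ℂ), (β₂ : ℂ), β₃, (starRingEnd ℂ) β₃] with hv
    have hvinj : Function.Injective v := by
      have hne01 : (β : ℂ) ≠ (β₂ : ℂ) := by
        simp only [ne_eq, Complex.ofReal_inj]
        intro h; rw [← h] at hβ₂pos; linarith
      have him0 : ((β : ℂ)).im = 0 := Complex.ofReal_im β
      have him1 : ((β₂ : ℂ)).im = 0 := Complex.ofReal_im β₂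
      have him3 : ((starRingEnd ℂ) β₃).im = -β₃.im := Complex.conj_im β₃
      have hne02 : (β : ℂ) ≠ β₃ := fun h => hβ₃im (by rw [← h, him0])
      have hne03 : (β : ℂ) ≠ (starRingEnd ℂ) β₃ := fun h => hβ₃im (by
        have := congrArg Complex.im h
        rw [him0, him3] at this
        linarith)
      have hne12 : (β₂ : ℂ) ≠ β₃ := fun h => hβ₃im (by rw [← h, him1])
      have hne13 : (β₂ : ℂ) ≠ (starRingEnd ℂ) β₃ := fun h => hβ₃im (by
        have := congrArg Complex.im h
        rw [him1, him3] at this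
        linarith)
      have hne23 : β₃ ≠ (starRingEnd ℂ) β₃ := fun h => hβ₃im (by
        have := congrArg Complex.im h
        rw [him3] at this
        linarith)
      intro a b hab
      fin_cases a <;> fin_cases b <;>
        simp only [hv, Matrix.cons_val_zero, Matrix.cons_val_one, Matrix.head_cons,
          Matrix.cons_val_two, Matrix.tail_cons, Matrix.cons_val_three] at hab <;>
        first
          | rfl
          | exact absurd hab hne01 | exact absurd hab.symm hne01
          | exact absurd hab hne02 | exact absurd hab.symm hne02
          | exact absurd hab hne03 | exact absurd hab.symm hne03
          | exact absurd hab hne12 | exact absurd hab.symm hne12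
          | exact absurd hab hne13 | exact absurd hab.symm hne13
          | exact absurd hab hne23 | exact absurd hab.symm hne23
    obtain ⟨N, hN⟩ := coeff_bound v hvinj B hB0
    set F : Set (Fin 4 → ℤ) := Set.Icc (fun _ => -N) (fun _ => N) with hF
    have hFfin : F.Finite := Set.finite_Icc _ _
    set G : (Fin 4 → ℤ) → ℝ × ℂ :=
      fun c => ((∑ j : Fin 4, (c j : ℝ) * β₂ ^ (j : ℕ) : ℝ), evc β₃ c) with hG
    apply Set.Finite.subset (hFfin.image G)
    rintro s ⟨k, hk, rfl⟩
    set c : Fin 4 → ℤ := fun j => ∑ i ∈ Finset.Icc l k, d i * Rvec (i + 3 - k) j with hc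
    -- the four archimedean bounds
    have hev : ∀ i : Fin 4, (∑ j : Fin 4, (c j : ℂ) * v i ^ (j : ℕ)) = evc (v i) c := by
      intro i; rfl
    have hbound : ∀ i : Fin 4, ‖∑ j : Fin 4, (c j : ℂ) * v i ^ (j : ℕ)‖ ≤ B := by
      intro i
      rw [hev]
      fin_cases i
      · -- β
        show ‖evc (β : ℂ) c‖ ≤ B
        rw [hc, evc_sum d hβC0 hβrootC]
        refine le_trans (beta_bound hk hβ d hd1) ?_
        exact le_trans (le_max_left _ _) (le_max_left _ _)
      · -- β₂
        show ‖evc (β₂ : ℂ) c‖ ≤ B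
        rw [hc, evc_sum d hβ₂C0 hβ₂rootC]
        refine le_trans (tail_bound hβ₂C0 hβ₂n1 d hd1 hdl h1sum0 hk) ?_
        exact le_trans (le_max_right _ _) (le_max_left _ _)
      · -- β₃
        show ‖evc β₃ c‖ ≤ B
        rw [hc, evc_sum d hβ₃0 hβ₃root]
        refine le_trans (tail_bound hβ₃0 hβ₃n1 d hd1 hdl h2sum0 hk) ?_
        exact le_max_right _ _
      · -- conj β₃
        show ‖evc ((starRingEnd ℂ) β₃) c‖ ≤ B
        rw [evc_conj, RCLike.norm_conj]
        rw [hc, evc_sum d hβ₃0 hβ₃root]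
        refine le_trans (tail_bound hβ₃0 hβ₃n1 d hd1 hdl h2sum0 hk) ?_
        exact le_max_right _ _
    have hcF : c ∈ F := by
      rw [hF, Set.mem_Icc]
      have := hN c hbound
      constructor
      · intro j; exact (this j).1
      · intro j; exact (this j).2
    refine ⟨c, hcF, ?_⟩
    -- G c = Adig
    rw [hAd k, hG]
    apply Prod.ext
    · -- real components, via ofReal injectivity
      show (∑ j : Fin 4, (c j : ℝ) * β₂ ^ (j : ℕ) : ℝ)
          = β₂ ^ (3 - k) * ∑ i ∈ Finset.Icc l k, (d i : ℝ) * β₂ ^ i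
      have hinj := Complex.ofReal_injective
      apply hinj
      have hlhs : ((∑ j : Fin 4, (c j : ℝ) * β₂ ^ (j : ℕ) : ℝ) : ℂ) = evc (β₂ : ℂ) c := by
        unfold evc
        push_cast
        rfl
      have hrhs : ((β₂ ^ (3 - k) * ∑ i ∈ Finset.Icc l k, (d i : ℝ) * β₂ ^ i : ℝ) : ℂ)
          = (β₂ : ℂ) ^ (3 - k) * ∑ i ∈ Finset.Icc l k, (d i : ℂ) * (β₂ : ℂ) ^ i := by
        push_cast
        rfl
      rw [hlhs, hrhs, hc, evc_sum d hβ₂C0 hβ₂rootC]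
    · show evc β₃ c = β₃ ^ (3 - k) * ∑ i ∈ Finset.Icc l k, (d i : ℂ) * β₃ ^ i
      rw [hc, evc_sum d hβ₃0 hβ₃root]
  · -- finite → x = y
    intro hfin
    by_contra hne
    have hzero : x - y ≠ 0 := sub_ne_zero_of_ne hne
    obtain ⟨C, hC⟩ := hfin.isBounded.exists_norm_le
    have hcomp : (x - y).1 ≠ 0 ∨ (x - y).2 ≠ 0 := by
      by_contra h
      push_neg at h
      exact hzero (Prod.ext h.1 h.2)
    rcases hcomp with h | h
    · obtain ⟨k, hk, hgt⟩ := unbounded hβ₂C0 hβ₂n1 d hdl h1sumC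
        (Complex.ofReal_ne_zero.2 h) C
      have hmem : Adig ((β₂ : ℝ), β₃) l ε ε' k ∈ { s | ∃ k ≥ l, s = Adig ((β₂:ℝ), β₃) l ε ε' k } :=
        ⟨k, hk, rfl⟩
      have hle := hC _ hmem
      have hfst : ‖(Adig ((β₂ : ℝ), β₃) l ε ε' k).1‖ ≤ ‖Adig ((β₂ : ℝ), β₃) l ε ε' k‖ :=
        norm_fst_le _
      rw [hAd k] at hfst
      have hcast : ‖(β₂ : ℂ) ^ (3 - k) * ∑ i ∈ Finset.Icc l k, (d i : ℂ) * (β₂ : ℂ) ^ i‖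
          = ‖(β₂ ^ (3 - k) * ∑ i ∈ Finset.Icc l k, (d i : ℝ) * β₂ ^ i : ℝ)‖ := by
        rw [show ((β₂ : ℂ) ^ (3 - k) * ∑ i ∈ Finset.Icc l k, (d i : ℂ) * (β₂ : ℂ) ^ i)
            = ((β₂ ^ (3 - k) * ∑ i ∈ Finset.Icc l k, (d i : ℝ) * β₂ ^ i : ℝ) : ℂ) by push_cast; rfl,
          Complex.norm_real]
      rw [hcast] at hgt
      simp only [hAd k] at hle
      linarith [le_trans hfst hle]
    · obtain ⟨k, hk, hgt⟩ := unbounded hβ₃0 hβ₃n1 d hdl h2sum h C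
      have hmem : Adig ((β₂ : ℝ), β₃) l ε ε' k ∈ { s | ∃ k ≥ l, s = Adig ((β₂:ℝ), β₃) l ε ε' k } :=
        ⟨k, hk, rfl⟩
      have hle := hC _ hmem
      have hsnd : ‖(Adig ((β₂ : ℝ), β₃) l ε ε' k).2‖ ≤ ‖Adig ((β₂ : ℝ), β₃) l ε ε' k‖ :=
        norm_snd_le _
      rw [hAd k] at hsnd
      simp only [hAd k] at hle
      linarith [le_trans hsnd hle]
end
end

section
/- The set ℰ(1+α²) = ℰ ∩ (ℰ + 1 + α²) is the singleton { α⁴/(1-α²) }, where the division is componentwise in ℝ×ℂ. -/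
open MeasureTheory

noncomputable section

/-- `ℰ(u) = ℰ ∩ (ℰ + u)`. -/
def Eset (α u : ℝ × ℂ) : Set (ℝ × ℂ) :=
  RauzyE α ∩ ((fun z => z + u) '' RauzyE α)


lemma fst_zpowP (p : ℝ × ℂ) (n : ℤ) : (p ^ n).1 = p.1 ^ n := by
  cases n with
  | ofNat m => simp
  | negSucc m => simp [zpow_negSucc]

lemma snd_zpowP (p : ℝ × ℂ) (n : ℤ) : (p ^ n).2 = p.2 ^ n := by
  cases n with
  | ofNat m => simp
  | negSucc m => simp [zpow_negSucc]

lemma hasSum_evenInd {K : Type*} [NormedField K] [CompleteSpace K] {y : K} (hy : ‖y‖ < 1) :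
    HasSum (fun i : ℤ => if Even i ∧ 4 ≤ i then y ^ i else 0) (y ^ 4 / (1 - y ^ 2)) := by
  have h2 : ‖y ^ 2‖ < 1 := by
    rw [norm_pow]; nlinarith [norm_nonneg y]
  have hgeo : HasSum (fun n : ℕ => y ^ 4 * (y ^ 2) ^ n) (y ^ 4 * (1 - y ^ 2)⁻¹) :=
    (hasSum_geometric_of_norm_lt_one h2).mul_left _
  have hinj : Function.Injective (fun n : ℕ => (4 + 2 * n : ℤ)) := by
    intro a b h; simp only at h; omega
  have hzero : ∀ i ∉ Set.range (fun n : ℕ => (4 + 2 * n : ℤ)),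
      (if Even i ∧ 4 ≤ i then y ^ i else 0) = 0 := by
    intro i hi
    rw [if_neg]
    rintro ⟨⟨k, hk⟩, h4⟩
    exact hi ⟨(k - 2).toNat, by show 4 + 2 * (((k - 2).toNat : ℕ) : ℤ) = i; omega⟩
  have hcomp : ((fun i : ℤ => if Even i ∧ 4 ≤ i then y ^ i else 0) ∘ fun n : ℕ => (4 + 2 * n : ℤ))
      = fun n : ℕ => y ^ 4 * (y ^ 2) ^ n := by
    funext n
    have hc : Even (4 + 2 * (n : ℤ)) ∧ 4 ≤ 4 + 2 * (n : ℤ) := ⟨⟨2 + n, by ring⟩, by omega⟩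
    have hcast : (4 + 2 * (n : ℤ)) = ((4 + 2 * n : ℕ) : ℤ) := by push_cast; ring
    simp only [Function.comp_apply]
    rw [if_pos hc, hcast, zpow_natCast, pow_add, pow_mul]
  rw [div_eq_mul_inv]
  exact (hinj.hasSum_iff hzero).mp (by rw [hcomp]; exact hgeo)

lemma hasSum_oddInd {K : Type*} [NormedField K] [CompleteSpace K] {y : K} (hy : ‖y‖ < 1) :
    HasSum (fun i : ℤ => if ¬ Even i ∧ 4 ≤ i then y ^ i else 0) (y ^ 5 / (1 - y ^ 2)) := by
  have h2 : ‖y ^ 2‖ < 1 := by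
    rw [norm_pow]; nlinarith [norm_nonneg y]
  have hgeo : HasSum (fun n : ℕ => y ^ 5 * (y ^ 2) ^ n) (y ^ 5 * (1 - y ^ 2)⁻¹) :=
    (hasSum_geometric_of_norm_lt_one h2).mul_left _
  have hinj : Function.Injective (fun n : ℕ => (5 + 2 * n : ℤ)) := by
    intro a b h; simp only at h; omega
  have hzero : ∀ i ∉ Set.range (fun n : ℕ => (5 + 2 * n : ℤ)),
      (if ¬ Even i ∧ 4 ≤ i then y ^ i else 0) = 0 := by
    intro i hi
    rw [if_neg]
    rintro ⟨hne, h4⟩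
    obtain ⟨k, hk⟩ := Int.not_even_iff_odd.mp hne
    exact hi ⟨(k - 2).toNat, by show 5 + 2 * (((k - 2).toNat : ℕ) : ℤ) = i; omega⟩
  have hcomp : ((fun i : ℤ => if ¬ Even i ∧ 4 ≤ i then y ^ i else 0) ∘ fun n : ℕ => (5 + 2 * n : ℤ))
      = fun n : ℕ => y ^ 5 * (y ^ 2) ^ n := by
    funext n
    have hne : ¬ Even (5 + 2 * (n : ℤ)) := by rw [Int.even_iff]; omega
    have hc : (¬ Even (5 + 2 * (n : ℤ))) ∧ 4 ≤ 5 + 2 * (n : ℤ) := ⟨hne, by omega⟩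
    have hcast : (5 + 2 * (n : ℤ)) = ((5 + 2 * n : ℕ) : ℤ) := by push_cast; ring
    simp only [Function.comp_apply]
    rw [if_pos hc, hcast, zpow_natCast, pow_add, pow_mul]
  rw [div_eq_mul_inv]
  exact (hinj.hasSum_iff hzero).mp (by rw [hcomp]; exact hgeo)

lemma zpow_pos_even {x : ℝ} (h2 : x < 0) {i : ℤ} (h4 : 4 ≤ i) (he : Even i) : 0 < x ^ i := by
  lift i to ℕ using (by omega)
  rw [zpow_natCast]
  exact Even.pow_pos ((Int.even_coe_nat _).mp he) (ne_of_lt h2)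

lemma zpow_neg_odd {x : ℝ} (h2 : x < 0) {i : ℤ} (h4 : 4 ≤ i) (he : ¬ Even i) : x ^ i < 0 := by
  lift i to ℕ using (by omega)
  rw [zpow_natCast]
  refine Odd.pow_neg ?_ h2
  exact Nat.not_even_iff_odd.mp (fun h => he ((Int.even_coe_nat _).mpr h))

lemma term_le {x : ℝ} (h2 : x < 0) {ε : ℤ → ℕ} (hb : ∀ i, ε i ≤ 1)
    (hz0 : ∀ i, i < 4 → ε i = 0) (i : ℤ) :
    (ε i : ℝ) * x ^ i ≤ (if Even i ∧ 4 ≤ i then x ^ i else 0) := by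
  by_cases h4 : 4 ≤ i
  · have hc1 : (ε i : ℝ) ≤ 1 := by exact_mod_cast hb i
    have hc0 : (0 : ℝ) ≤ (ε i : ℝ) := Nat.cast_nonneg _
    by_cases he : Even i
    · rw [if_pos ⟨he, h4⟩]
      have := zpow_pos_even h2 h4 he
      nlinarith
    · rw [if_neg (fun h => he h.1)]
      have := zpow_neg_odd h2 h4 he
      nlinarith
  · rw [if_neg (fun h => h4 h.2), hz0 i (by omega), Nat.cast_zero, zero_mul]

lemma term_ge {x : ℝ} (h2 : x < 0) {ε : ℤ → ℕ} (hb : ∀ i, ε i ≤ 1)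
    (hz0 : ∀ i, i < 4 → ε i = 0) (i : ℤ) :
    (if ¬ Even i ∧ 4 ≤ i then x ^ i else 0) ≤ (ε i : ℝ) * x ^ i := by
  by_cases h4 : 4 ≤ i
  · have hc1 : (ε i : ℝ) ≤ 1 := by exact_mod_cast hb i
    have hc0 : (0 : ℝ) ≤ (ε i : ℝ) := Nat.cast_nonneg _
    by_cases he : Even i
    · rw [if_neg (fun h => h.1 he)]
      have := zpow_pos_even h2 h4 he
      nlinarith
    · rw [if_pos ⟨he, h4⟩]
      have := zpow_neg_odd h2 h4 he
      nlinarith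
  · rw [if_neg (fun h => h4 h.2), hz0 i (by omega), Nat.cast_zero, zero_mul]

lemma eps_eq_of_max {x : ℝ} (h1 : -1 < x) (h2 : x < 0) {ε : ℤ → ℕ} (hb : ∀ i, ε i ≤ 1)
    (hz0 : ∀ i, i < 4 → ε i = 0) {s : ℝ}
    (hs : HasSum (fun i : ℤ => (ε i : ℝ) * x ^ i) s) (heq : s = x ^ 4 / (1 - x ^ 2)) :
    ∀ i : ℤ, ε i = if Even i ∧ 4 ≤ i then 1 else 0 := by
  have hn : ‖x‖ < 1 := by rw [Real.norm_eq_abs, abs_lt]; constructor <;> linarith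
  have hF := hasSum_evenInd hn
  have hsub : HasSum (fun i : ℤ =>
      (if Even i ∧ 4 ≤ i then x ^ i else 0) - (ε i : ℝ) * x ^ i) 0 := by
    have := hF.sub hs
    rwa [heq, sub_self] at this
  have hterm : ∀ i : ℤ, (if Even i ∧ 4 ≤ i then x ^ i else 0) = (ε i : ℝ) * x ^ i := by
    intro i
    have hle := le_hasSum hsub i
      (fun j _ => sub_nonneg.mpr (term_le h2 hb hz0 j))
    have hge := sub_nonneg.mpr (term_le h2 hb hz0 i)
    have : (if Even i ∧ 4 ≤ i then x ^ i else 0) - (ε i : ℝ) * x ^ i = 0 := le_antisymm hle hge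
    linarith
  intro i
  by_cases hc : Even i ∧ 4 ≤ i
  · rw [if_pos hc]
    have h := hterm i
    rw [if_pos hc] at h
    have hxne : x ^ i ≠ 0 := (zpow_pos_even h2 hc.2 hc.1).ne'
    have h1' : ((1 : ℝ) - (ε i : ℝ)) * x ^ i = 0 := by linear_combination h
    rcases mul_eq_zero.mp h1' with h' | h'
    · have : (ε i : ℝ) = 1 := by linarith
      exact_mod_cast this
    · exact absurd h' hxne
  · rw [if_neg hc]
    by_cases h4 : 4 ≤ i
    · have he : ¬ Even i := fun h => hc ⟨h, h4⟩
      have h := hterm i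
      rw [if_neg hc] at h
      have hxne : x ^ i ≠ 0 := (zpow_neg_odd h2 h4 he).ne
      rcases mul_eq_zero.mp h.symm with h' | h'
      · exact_mod_cast h'
      · exact absurd h' hxne
    · exact hz0 i (by omega)

theorem Eset_one_add_alpha_sq (β β₂ : ℝ) (β₃ : ℂ)
    (hβ : 1 < β) (hβroot : β ^ 4 = β ^ 3 + β ^ 2 + β + 1)
    (hβ₂neg : -1 < β₂) (hβ₂pos : β₂ < 0)
    (hβ₂root : β₂ ^ 4 = β₂ ^ 3 + β₂ ^ 2 + β₂ + 1)
    (hβ₃abs : ‖β₃‖ < 1) (hβ₃im : β₃.im ≠ 0)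
    (hβ₃root : β₃ ^ 4 = β₃ ^ 3 + β₃ ^ 2 + β₃ + 1)
    (α : ℝ × ℂ) (hα : α = (β₂, β₃)) :
    Eset α (1 + α ^ 2) = {α ^ 4 / (1 - α ^ 2)} := by
  subst hα
  have hxn : ‖β₂‖ < 1 := by rw [Real.norm_eq_abs, abs_lt]; constructor <;> linarith
  have hcn : ‖β₃‖ < 1 := hβ₃abs
  have hx2 : (1 : ℝ) - β₂ ^ 2 ≠ 0 := by nlinarith
  have hc2 : (1 : ℂ) - β₃ ^ 2 ≠ 0 := by
    intro h
    rw [sub_eq_zero] at h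
    have h1 : ‖β₃ ^ 2‖ = 1 := by rw [← h]; simp
    rw [norm_pow] at h1
    nlinarith [norm_nonneg β₃]
  have h5r : β₂ ^ 5 = 2 * β₂ ^ 4 - 1 := by linear_combination (β₂ - 1) * hβ₂root
  have h5c : β₃ ^ 5 = 2 * β₃ ^ 4 - 1 := by linear_combination (β₃ - 1) * hβ₃root
  have hid : β₂ ^ 5 / (1 - β₂ ^ 2) + (1 + β₂ ^ 2) = β₂ ^ 4 / (1 - β₂ ^ 2) := by
    field_simp
    linear_combination h5r
  have hidC : β₃ ^ 5 / (1 - β₃ ^ 2) + (1 + β₃ ^ 2) = β₃ ^ 4 / (1 - β₃ ^ 2) := by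
    field_simp
    linear_combination h5c
  have htgt : ((β₂, β₃) : ℝ × ℂ) ^ 4 / (1 - ((β₂, β₃) : ℝ × ℂ) ^ 2)
      = ((β₂ ^ 4 / (1 - β₂ ^ 2), β₃ ^ 4 / (1 - β₃ ^ 2)) : ℝ × ℂ) := by
    ext <;> simp
  have hFprod : HasSum (fun i : ℤ => if Even i ∧ 4 ≤ i then ((β₂, β₃) : ℝ × ℂ) ^ i else 0)
      (((β₂, β₃) : ℝ × ℂ) ^ 4 / (1 - ((β₂, β₃) : ℝ × ℂ) ^ 2)) := by
    have h := (hasSum_evenInd hxn).prodMk (hasSum_evenInd hcn)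
    rw [htgt]
    convert h using 1
    funext i
    split_ifs with h'
    · exact Prod.ext (fst_zpowP _ _) (snd_zpowP _ _)
    · rfl
  have hGprod : HasSum (fun i : ℤ => if ¬ Even i ∧ 4 ≤ i then ((β₂, β₃) : ℝ × ℂ) ^ i else 0)
      (((β₂ ^ 5 / (1 - β₂ ^ 2), β₃ ^ 5 / (1 - β₃ ^ 2))) : ℝ × ℂ) := by
    have h := (hasSum_oddInd hxn).prodMk (hasSum_oddInd hcn)
    convert h using 1
    funext i
    split_ifs with h'
    · exact Prod.ext (fst_zpowP _ _) (snd_zpowP _ _)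
    · rfl
  ext z
  simp only [Eset, RauzyE, Set.mem_inter_iff, Set.mem_image, Set.mem_setOf_eq,
    Set.mem_singleton_iff]
  constructor
  · rintro ⟨⟨ε, ⟨hεb, hεz, -⟩, hεs⟩, w, ⟨δ, ⟨hδb, hδz, -⟩, hδs⟩, hw⟩
    have hεs' : HasSum (fun i : ℤ => ((ε i : ℝ × ℂ)) * ((β₂, β₃) : ℝ × ℂ) ^ i) z := hεs
    have hδs' : HasSum (fun i : ℤ => ((δ i : ℝ × ℂ)) * ((β₂, β₃) : ℝ × ℂ) ^ i) w := hδs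
    have hεs1 : HasSum (fun i : ℤ => (ε i : ℝ) * β₂ ^ i) z.1 := by
      have h := hεs'.map (AddMonoidHom.fst ℝ ℂ) continuous_fst
      have he : ((AddMonoidHom.fst ℝ ℂ) ∘ fun i : ℤ => ((ε i : ℝ × ℂ) * ((β₂, β₃) : ℝ × ℂ) ^ i))
          = fun i : ℤ => (ε i : ℝ) * β₂ ^ i := by
        funext i; simp [Function.comp, fst_zpowP]
      rw [he] at h
      exact h
    have hδs1 : HasSum (fun i : ℤ => (δ i : ℝ) * β₂ ^ i) w.1 := by
      have h := hδs'.map (AddMonoidHom.fst ℝ ℂ) continuous_fst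
      have he : ((AddMonoidHom.fst ℝ ℂ) ∘ fun i : ℤ => ((δ i : ℝ × ℂ) * ((β₂, β₃) : ℝ × ℂ) ^ i))
          = fun i : ℤ => (δ i : ℝ) * β₂ ^ i := by
        funext i; simp [Function.comp, fst_zpowP]
      rw [he] at h
      exact h
    have hz1 : z.1 = w.1 + (1 + β₂ ^ 2) := by rw [← hw]; simp
    have hub : z.1 ≤ β₂ ^ 4 / (1 - β₂ ^ 2) :=
      hasSum_le (term_le hβ₂pos hεb hεz) hεs1 (hasSum_evenInd hxn)
    have hlb : β₂ ^ 5 / (1 - β₂ ^ 2) ≤ w.1 :=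
      hasSum_le (term_ge hβ₂pos hδb hδz) (hasSum_oddInd hxn) hδs1
    have hmax : z.1 = β₂ ^ 4 / (1 - β₂ ^ 2) := by linarith
    have hεdet := eps_eq_of_max hβ₂neg hβ₂pos hεb hεz hεs1 hmax
    have hfun : (fun i : ℤ => ((ε i : ℝ × ℂ)) * ((β₂, β₃) : ℝ × ℂ) ^ i)
        = fun i : ℤ => if Even i ∧ 4 ≤ i then ((β₂, β₃) : ℝ × ℂ) ^ i else 0 := by
      funext i
      rw [hεdet i]
      split_ifs with h' <;> simp
    rw [hfun] at hεs'
    exact hεs'.unique hFprod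
  · rintro rfl
    refine ⟨⟨fun i => if Even i ∧ 4 ≤ i then 1 else 0, ⟨?_, ?_, ?_⟩, ?_⟩,
      ⟨(β₂ ^ 5 / (1 - β₂ ^ 2), β₃ ^ 5 / (1 - β₃ ^ 2)),
        ⟨fun i => if ¬ Even i ∧ 4 ≤ i then 1 else 0, ⟨?_, ?_, ?_⟩, ?_⟩, ?_⟩⟩
    · intro i; dsimp only; split_ifs <;> omega
    · intro i hi; dsimp only; rw [if_neg (fun h => absurd h.2 (by omega))]
    · rintro i ⟨h0, h1', -, -⟩
      dsimp only at h0 h1'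
      have e0 : Even i ∧ 4 ≤ i := by
        by_contra hne; rw [if_neg hne] at h0; omega
      have e1 : Even (i + 1) ∧ 4 ≤ i + 1 := by
        by_contra hne; rw [if_neg hne] at h1'; omega
      rw [Int.even_iff] at e0 e1
      omega
    · show HasSum _ _
      have hfun : (fun i : ℤ => (((if Even i ∧ 4 ≤ i then 1 else 0 : ℕ)) : ℝ × ℂ)
          * ((β₂, β₃) : ℝ × ℂ) ^ i)
          = fun i : ℤ => if Even i ∧ 4 ≤ i then ((β₂, β₃) : ℝ × ℂ) ^ i else 0 := by
        funext i; split_ifs with h' <;> simp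
      rw [hfun]
      exact hFprod
    · intro i; dsimp only; split_ifs <;> omega
    · intro i hi; dsimp only; rw [if_neg (fun h => absurd h.2 (by omega))]
    · rintro i ⟨h0, h1', -, -⟩
      dsimp only at h0 h1'
      have e0 : ¬ Even i ∧ 4 ≤ i := by
        by_contra hne; rw [if_neg hne] at h0; omega
      have e1 : ¬ Even (i + 1) ∧ 4 ≤ i + 1 := by
        by_contra hne; rw [if_neg hne] at h1'; omega
      rw [Int.even_iff] at e0 e1
      omega
    · show HasSum _ _
      have hfun : (fun i : ℤ => (((if ¬ Even i ∧ 4 ≤ i then 1 else 0 : ℕ)) : ℝ × ℂ)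
          * ((β₂, β₃) : ℝ × ℂ) ^ i)
          = fun i : ℤ => if ¬ Even i ∧ 4 ≤ i then ((β₂, β₃) : ℝ × ℂ) ^ i else 0 := by
        funext i; split_ifs with h' <;> simp
      rw [hfun]
      exact hGprod
    · rw [htgt]
      ext
      · simpa using hid
      · simpa using hidC
end
end

section
/- The set ℰ(α⁻²+α⁻¹+α) = ℰ ∩ (ℰ + α⁻² + α⁻¹ + α) is the singleton { (α⁵+α⁶)/(1-α⁴) }, where the division is componentwise in ℝ×ℂ. -/
open MeasureTheory

noncomputable section

/-! ### Auxiliary material -/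



def epsA : ℤ → ℕ := fun i => if 4 ≤ i ∧ (i % 4 = 1 ∨ i % 4 = 2) then 1 else 0
def epsB : ℤ → ℕ := fun i => if 4 ≤ i ∧ (i % 4 = 0 ∨ i % 4 = 3) then 1 else 0

lemma one_sub_pow_ne {𝕜 : Type*} [NormedField 𝕜] (γ : 𝕜) (h : ‖γ‖ < 1) : 1 - γ^4 ≠ 0 := by
  intro hc
  have h1 : γ^4 = 1 := by linear_combination -hc
  have h2 : ‖γ‖^4 < 1 := pow_lt_one₀ (norm_nonneg γ) h (by norm_num)
  rw [← norm_pow, h1] at h2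
  simp at h2

lemma hasSum_residue {𝕜 : Type*} [NormedField 𝕜] [CompleteSpace 𝕜] (γ : 𝕜) (hγ : ‖γ‖ < 1)
    (m : ℕ) :
    HasSum (fun j : ℕ => if j % 4 = m % 4 ∧ m ≤ j then γ^j else 0) (γ^m * (1 - γ^4)⁻¹) := by
  have h4 : ‖γ^4‖ < 1 := by
    rw [norm_pow]; exact pow_lt_one₀ (norm_nonneg γ) hγ (by norm_num)
  have hg := (hasSum_geometric_of_norm_lt_one h4).mul_left (γ^m)
  have hinj : Function.Injective (fun k : ℕ => 4*k + m) := by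
    intro a b hab; simp only at hab; omega
  rw [← Function.Injective.hasSum_iff hinj (by
    intro x hx
    rw [if_neg]
    rintro ⟨h1, h2⟩
    exact hx ⟨(x - m)/4, by show 4*((x-m)/4) + m = x; omega⟩)]
  have hfun : (fun k : ℕ => γ^m * (γ^4)^k) = fun k : ℕ =>
      (if (4*k+m) % 4 = m % 4 ∧ m ≤ 4*k+m then γ^(4*k+m) else 0) := by
    funext k
    rw [if_pos ⟨by omega, by omega⟩, ← pow_mul, ← pow_add]
    ring_nf
  rw [hfun] at hg
  exact hg

lemma hasSum_int_shift {M : Type*} [AddCommMonoid M] [TopologicalSpace M] (l : ℤ) (f : ℤ → M)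
    (h0 : ∀ i, i < l → f i = 0) {a : M} :
    HasSum (fun j : ℕ => f (l + j)) a ↔ HasSum f a :=
  Function.Injective.hasSum_iff (g := fun j : ℕ => l + (j : ℤ))
    (by intro a b hab; simp only at hab; omega)
    (by
      intro x hx
      apply h0
      by_contra hc
      exact hx ⟨(x - l).toNat, by show l + ((x - l).toNat : ℤ) = x; omega⟩)

lemma hasSum_epsA {𝕜 : Type*} [NormedField 𝕜] [CompleteSpace 𝕜] (γ : 𝕜) (hγ : ‖γ‖ < 1) :
    HasSum (fun i : ℤ => (epsA i : 𝕜) * γ^i) ((γ^5 + γ^6)/(1 - γ^4)) := by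
  rw [← hasSum_int_shift 0 _ (fun i hi => by
    simp only [epsA]
    rw [if_neg (by omega)]
    simp)]
  have key : (fun j : ℕ => (epsA ((0:ℤ) + j) : 𝕜) * γ^((0:ℤ) + (j:ℤ))) =
      fun j : ℕ => ((if j % 4 = 5 % 4 ∧ 5 ≤ j then γ^j else 0) +
                    (if j % 4 = 6 % 4 ∧ 6 ≤ j then γ^j else 0)) := by
    funext j
    rw [zero_add, zpow_natCast]
    by_cases hA : 4 ≤ (j:ℤ) ∧ ((j:ℤ) % 4 = 1 ∨ (j:ℤ) % 4 = 2)
    · simp only [epsA]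
      rw [if_pos hA]
      rcases hA.2 with h | h
      · rw [if_pos (by omega), if_neg (by omega)]; simp
      · rw [if_neg (by omega), if_pos (by omega)]; simp
    · simp only [epsA]
      rw [if_neg hA, if_neg (by omega), if_neg (by omega)]; simp
  rw [key]
  have := (hasSum_residue γ hγ 5).add (hasSum_residue γ hγ 6)
  convert this using 1
  rw [div_eq_mul_inv]; ring

lemma hasSum_epsB {𝕜 : Type*} [NormedField 𝕜] [CompleteSpace 𝕜] (γ : 𝕜) (hγ : ‖γ‖ < 1) :
    HasSum (fun i : ℤ => (epsB i : 𝕜) * γ^i) ((γ^4 + γ^7)/(1 - γ^4)) := by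
  rw [← hasSum_int_shift 0 _ (fun i hi => by
    simp only [epsB]
    rw [if_neg (by omega)]
    simp)]
  have key : (fun j : ℕ => (epsB ((0:ℤ) + j) : 𝕜) * γ^((0:ℤ) + (j:ℤ))) =
      fun j : ℕ => ((if j % 4 = 4 % 4 ∧ 4 ≤ j then γ^j else 0) +
                    (if j % 4 = 7 % 4 ∧ 7 ≤ j then γ^j else 0)) := by
    funext j
    rw [zero_add, zpow_natCast]
    by_cases hA : 4 ≤ (j:ℤ) ∧ ((j:ℤ) % 4 = 0 ∨ (j:ℤ) % 4 = 3)
    · simp only [epsB]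
      rw [if_pos hA]
      rcases hA.2 with h | h
      · rw [if_pos (by omega), if_neg (by omega)]; simp
      · rw [if_neg (by omega), if_pos (by omega)]; simp
    · simp only [epsB]
      rw [if_neg hA, if_neg (by omega), if_neg (by omega)]; simp
  rw [key]
  have := (hasSum_residue γ hγ 4).add (hasSum_residue γ hγ 7)
  convert this using 1
  rw [div_eq_mul_inv]; ring


set_option maxHeartbeats 1000000 in
lemma s_pin (s : ℝ) (h1 : -1 < s) (h2 : s ≤ 0.25)
    (hR : -64*s^6 + 96*s^5 - 16*s^4 - 24*s^3 - 16*s^2 + 12*s + 1 = 0) :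
    -0.07638 ≤ s ∧ s ≤ -0.076378 := by
  constructor
  · by_contra hc
    push_neg at hc
    nlinarith [sq_nonneg (s+1), sq_nonneg (s+0.5), sq_nonneg (s+0.25), sq_nonneg s,
      sq_nonneg (s-0.25), mul_pos (by linarith : (0:ℝ) < s+1) (by linarith : (0:ℝ) < -0.07638 - s),
      sq_nonneg (s*s), sq_nonneg (s*s*s)]
  · by_contra hc
    push_neg at hc
    nlinarith [sq_nonneg (s+1), sq_nonneg (s+0.5), sq_nonneg (s+0.25), sq_nonneg s,
      sq_nonneg (s-0.25), mul_nonneg (by linarith : (0:ℝ) ≤ s + 0.076378) (by linarith : (0:ℝ) ≤ 0.25 - s),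
      sq_nonneg (s*s), sq_nonneg (s*s*s), sq_nonneg (s*(s+0.076378)), sq_nonneg (s*s+0.076378*s)]

set_option maxHeartbeats 1000000 in
lemma theta_bounds (θ : ℂ) (habs : ‖θ‖ < 1) (him : θ.im ≠ 0)
    (hroot : θ^4 = θ^3 + θ^2 + θ + 1) :
    (-0.07638 ≤ θ.re ∧ θ.re ≤ -0.076378) ∧
    (0.663737 ≤ θ.im * θ.im ∧ θ.im * θ.im ≤ 0.663747) := by
  set s := θ.re with hs
  set t := θ.im with ht
  have h4 : θ*θ*θ*θ = θ*θ*θ + θ*θ + θ + 1 := by linear_combination hroot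
  have hre := congrArg Complex.re h4
  have him4 := congrArg Complex.im h4
  simp only [Complex.mul_re, Complex.mul_im, Complex.add_re, Complex.add_im,
    Complex.one_re, Complex.one_im, ← hs, ← ht] at hre him4
  have e1 : s^4 - 6*s^2*(t*t) + (t*t)^2 = s^3 - 3*s*(t*t) + s^2 - (t*t) + s + 1 := by
    linear_combination hre
  have e2 : (t*t)*(1-4*s) = 1 + 2*s + 3*s^2 - 4*s^3 := by
    have key : t * ((t*t)*(1-4*s) - (1 + 2*s + 3*s^2 - 4*s^3)) = 0 := by
      linear_combination him4
    rcases mul_eq_zero.1 key with h | h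
    · exact absurd h him
    · linarith
  have hw0 : 0 < t*t := mul_self_pos.mpr him
  have habs2 : s*s + t*t < 1 := by
    have h1 : Complex.normSq θ < 1 := by
      rw [← Complex.sq_norm]
      nlinarith [norm_nonneg θ]
    rw [Complex.normSq_apply] at h1
    exact h1
  have hs1 : -1 < s ∧ s < 1 := by constructor <;> nlinarith
  have hR : -64*s^6 + 96*s^5 - 16*s^4 - 24*s^3 - 16*s^2 + 12*s + 1 = 0 := by
    linear_combination (1-4*s)^2 * e1 - ((-6*s^2+3*s+1)*(1-4*s) + (1+2*s+3*s^2-4*s^3) + (t*t)*(1-4*s)) * e2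
  have hs_ub : s ≤ 0.25 := by
    by_contra hc
    push_neg at hc
    nlinarith [hs1.2, mul_pos hw0 (by linarith : (0:ℝ) < 4*s - 1)]
  obtain ⟨hsL, hsH⟩ := s_pin s hs1.1 hs_ub hR
  refine ⟨⟨hsL, hsH⟩, ?_, ?_⟩
  · nlinarith [e2, hsL, hsH]
  · nlinarith [e2, hsL, hsH]



lemma pair_bound (θ : ℂ) (hsL : -0.07638 ≤ θ.re) (hsH : θ.re ≤ -0.076378)
    (hc2 : Complex.normSq θ ≤ 0.669581)
    (x y : ℝ) (hx : |x| ≤ 1) (hy : |y| ≤ 1) : ‖(x:ℂ) + y*θ‖ ≤ 1.35 := by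
  have habs : ‖(x:ℂ) + y*θ‖ = ‖(x:ℂ) + y*θ‖ := rfl
  have h2 : ‖(x:ℂ) + y*θ‖^2 = x^2 + 2*x*y*θ.re + y^2*Complex.normSq θ := by
    rw [← habs, Complex.sq_norm]
    simp [Complex.normSq_apply, Complex.add_re, Complex.add_im, Complex.mul_re, Complex.mul_im,
      Complex.ofReal_re, Complex.ofReal_im]
    ring
  obtain ⟨hx1, hx2⟩ := abs_le.1 hx
  obtain ⟨hy1, hy2⟩ := abs_le.1 hy
  have hxy : |x*y| ≤ 1 := by rw [abs_mul]; exact mul_le_one₀ hx (abs_nonneg y) hy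
  obtain ⟨hxy1, hxy2⟩ := abs_le.1 hxy
  have hkey : x*y*θ.re ≤ 0.07638 := by nlinarith [mul_nonpos_of_nonneg_of_nonpos (by linarith : (0:ℝ) ≤ x*y + 1) (by linarith : θ.re ≤ 0)]
  have hns : 0 ≤ Complex.normSq θ := Complex.normSq_nonneg θ
  have hsq : ‖(x:ℂ) + y*θ‖^2 ≤ 1.8225 := by
    rw [h2]
    nlinarith [sq_nonneg x, sq_nonneg y, mul_le_of_le_one_left hns (by nlinarith [sq_nonneg y] : y^2 ≤ 1)]
  nlinarith [norm_nonneg ((x:ℂ) + y*θ)]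

lemma tail_bound (θ : ℂ) (hθ1 : ‖θ‖ < 1)
    (hsL : -0.07638 ≤ θ.re) (hsH : θ.re ≤ -0.076378)
    (hc2 : Complex.normSq θ ≤ 0.669581)
    (c : ℕ → ℤ) (hc : ∀ k, |c k| ≤ 1) (z W : ℂ)
    (h : HasSum (fun k : ℕ => (c k : ℂ) * θ^k * z) W) :
    ‖W‖ ≤ 4.0858 * ‖z‖ := by
  set f : ℕ → ℂ := fun k => (c k : ℂ) * θ^k * z with hf
  have hsum := h.summable
  have he : Summable (fun p : ℕ => f (2*p)) :=
    hsum.comp_injective (fun a b hab => by omega)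
  have ho : Summable (fun p : ℕ => f (2*p+1)) :=
    hsum.comp_injective (fun a b hab => by omega)
  have htot : HasSum f ((∑' p, f (2*p)) + (∑' p, f (2*p+1))) :=
    HasSum.even_add_odd he.hasSum ho.hasSum
  have hW : W = (∑' p, f (2*p)) + (∑' p, f (2*p+1)) := h.unique htot
  have hpairsum : HasSum (fun p : ℕ => f (2*p) + f (2*p+1)) ((∑' p, f (2*p)) + (∑' p, f (2*p+1))) :=
    he.hasSum.add ho.hasSum
  have hr2 : ‖θ‖^2 < 1 := by nlinarith [norm_nonneg θ]
  have hr2' : ‖θ‖^2 = Complex.normSq θ := Complex.sq_norm θ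
  have hpt : ∀ p : ℕ, ‖f (2*p) + f (2*p+1)‖ ≤ (1.35 * ‖z‖) * (‖θ‖^2)^p := by
    intro p
    have heq : f (2*p) + f (2*p+1) = (((c (2*p) : ℝ):ℂ) + ((c (2*p+1) : ℝ):ℂ) * θ) * (θ^(2*p) * z) := by
      simp only [hf]
      push_cast
      rw [pow_succ]
      ring
    rw [heq, norm_mul]
    have hcoef : ‖((c (2*p) : ℝ):ℂ) + ((c (2*p+1) : ℝ):ℂ) * θ‖ ≤ 1.35 := by
      apply pair_bound θ hsL hsH hc2
      · exact_mod_cast hc (2*p)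
      · exact_mod_cast hc (2*p+1)
    have hz : ‖θ^(2*p) * z‖ = (‖θ‖^2)^p * ‖z‖ := by
      rw [norm_mul, norm_pow, pow_mul]
    rw [hz]
    calc ‖((c (2*p) : ℝ):ℂ) + ((c (2*p+1) : ℝ):ℂ) * θ‖ * ((‖θ‖^2)^p * ‖z‖)
        ≤ 1.35 * ((‖θ‖^2)^p * ‖z‖) := by
          apply mul_le_mul_of_nonneg_right hcoef (by positivity)
      _ = (1.35 * ‖z‖) * (‖θ‖^2)^p := by ring
  have hgs : Summable (fun p : ℕ => (1.35 * ‖z‖) * (‖θ‖^2)^p) :=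
    (summable_geometric_of_lt_one (by positivity) hr2).mul_left _
  have hns : Summable (fun p : ℕ => ‖f (2*p) + f (2*p+1)‖) :=
    Summable.of_nonneg_of_le (fun p => norm_nonneg _) hpt hgs
  have h1 : ‖W‖ ≤ ∑' p, ‖f (2*p) + f (2*p+1)‖ := by
    rw [hW, ← hpairsum.tsum_eq]
    exact norm_tsum_le_tsum_norm hns
  have h2 : (∑' p, ‖f (2*p) + f (2*p+1)‖) ≤ ∑' p : ℕ, (1.35 * ‖z‖) * (‖θ‖^2)^p :=
    Summable.tsum_le_tsum hpt hns hgs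
  have h3 : (∑' p : ℕ, (1.35 * ‖z‖) * (‖θ‖^2)^p) = (1.35 * ‖z‖) * (1 - ‖θ‖^2)⁻¹ := by
    rw [tsum_mul_left, tsum_geometric_of_lt_one (by positivity) hr2]
  have h4 : (1 - ‖θ‖^2)⁻¹ ≤ (0.330419 : ℝ)⁻¹ := by
    apply inv_anti₀ (by norm_num)
    rw [hr2']; linarith
  have h5 : (1.35 * ‖z‖) * (1 - ‖θ‖^2)⁻¹ ≤ 4.0858 * ‖z‖ := by
    have hz0 : (0:ℝ) ≤ ‖z‖ := norm_nonneg z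
    have hp : (0:ℝ) < (1 - ‖θ‖^2)⁻¹ := by
      apply inv_pos.2; nlinarith
    nlinarith [mul_le_mul_of_nonneg_left h4 (by positivity : (0:ℝ) ≤ 1.35 * ‖z‖)]
  linarith




lemma nsq_vec (θ : ℂ) (a b c d : ℝ) :
    Complex.normSq ((a:ℂ) + b*θ + c*θ^2 + d*θ^3) =
      (a + b*θ.re + c*(θ.re*θ.re - θ.im*θ.im) + d*(θ.re*θ.re*θ.re - 3*θ.re*(θ.im*θ.im)))^2
      + (θ.im*θ.im)*(b + 2*c*θ.re + d*(3*θ.re*θ.re - θ.im*θ.im))^2 := by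
  simp [Complex.normSq_apply, pow_succ, Complex.mul_re, Complex.mul_im, Complex.add_re,
    Complex.add_im, Complex.ofReal_re, Complex.ofReal_im]
  ring

section
variable (s w : ℝ) (hsL : -0.07638 ≤ s) (hsH : s ≤ -0.076378)
  (hwL : 0.663737 ≤ w) (hwH : w ≤ 0.663747)

set_option maxHeartbeats 1600000

include hsL hsH hwL hwH

lemma mono_bounds :
    (0.005833 ≤ s*s ∧ s*s ≤ 0.005834) ∧
    (-0.0004457 ≤ s*s*s ∧ s*s*s ≤ -0.0004455) ∧
    (-0.05070 ≤ s*w ∧ s*w ≤ -0.05069) := by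
  have h1 : 0.005833 ≤ s*s := by nlinarith
  have h2 : s*s ≤ 0.005834 := by nlinarith
  refine ⟨⟨h1, h2⟩, ⟨?_, ?_⟩, ?_, ?_⟩
  · nlinarith
  · nlinarith
  · nlinarith
  · nlinarith

lemma nsq_Ac : 7.52 ≤ (-1 + -3*s + 0*(s*s - w) + 1*(s*s*s - 3*s*w))^2
      + w*(-3 + 2*0*s + 1*(3*s*s - w))^2 := by
  obtain ⟨⟨h2L,h2H⟩,⟨h3L,h3H⟩,hswL,hswH⟩ := mono_bounds s w hsL hsH hwL hwH
  have hXb : -1 + -3*s + 0*(s*s - w) + 1*(s*s*s - 3*s*w) ≤ -0.619 := by nlinarith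
  have hYb : -3 + 2*0*s + 1*(3*s*s - w) ≤ -3.646 := by nlinarith
  nlinarith [hXb, hYb, hwL,
    sq_nonneg ((-1 + -3*s + 0*(s*s - w) + 1*(s*s*s - 3*s*w)) + 0.619),
    sq_nonneg ((-3 + 2*0*s + 1*(3*s*s - w)) + 3.646),
    mul_nonneg (by linarith : (0:ℝ) ≤ w - 0.663737) (sq_nonneg (-3 + 2*0*s + 1*(3*s*s - w)))]

lemma nsq_Ac' : 7.52 ≤ (-1 + -4*s + 0*(s*s - w) + 1*(s*s*s - 3*s*w))^2
      + w*(-4 + 2*0*s + 1*(3*s*s - w))^2 := by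
  obtain ⟨⟨h2L,h2H⟩,⟨h3L,h3H⟩,hswL,hswH⟩ := mono_bounds s w hsL hsH hwL hwH
  have hXb : -1 + -4*s + 0*(s*s - w) + 1*(s*s*s - 3*s*w) ≤ -0.5428 := by nlinarith
  have hYb : -4 + 2*0*s + 1*(3*s*s - w) ≤ -4.6462 := by nlinarith
  nlinarith [hXb, hYb, hwL,
    sq_nonneg ((-1 + -4*s + 0*(s*s - w) + 1*(s*s*s - 3*s*w)) + 0.5428),
    sq_nonneg ((-4 + 2*0*s + 1*(3*s*s - w)) + 4.6462),
    mul_nonneg (by linarith : (0:ℝ) ≤ w - 0.663737) (sq_nonneg (-4 + 2*0*s + 1*(3*s*s - w)))]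

lemma nsq_Bc : 7.52 ≤ (-1 + 1*s + 2*(s*s - w) + -1*(s*s*s - 3*s*w))^2
      + w*(1 + 2*2*s + -1*(3*s*s - w))^2 := by
  obtain ⟨⟨h2L,h2H⟩,⟨h3L,h3H⟩,hswL,hswH⟩ := mono_bounds s w hsL hsH hwL hwH
  have hXb : -1 + 1*s + 2*(s*s - w) + -1*(s*s*s - 3*s*w) ≤ -2.5438 := by nlinarith
  have hYb : 1.3407 ≤ 1 + 2*2*s + -1*(3*s*s - w) := by nlinarith
  nlinarith [hXb, hYb, hwL,
    sq_nonneg ((-1 + 1*s + 2*(s*s - w) + -1*(s*s*s - 3*s*w)) + 2.5438),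
    sq_nonneg ((1 + 2*2*s + -1*(3*s*s - w)) - 1.3407),
    mul_nonneg (by linarith : (0:ℝ) ≤ w - 0.663737) (sq_nonneg (1 + 2*2*s + -1*(3*s*s - w)))]

lemma nsq_Bc' : 7.52 ≤ (-1 + 2*s + 2*(s*s - w) + -1*(s*s*s - 3*s*w))^2
      + w*(2 + 2*2*s + -1*(3*s*s - w))^2 := by
  obtain ⟨⟨h2L,h2H⟩,⟨h3L,h3H⟩,hswL,hswH⟩ := mono_bounds s w hsL hsH hwL hwH
  have hXb : -1 + 2*s + 2*(s*s - w) + -1*(s*s*s - 3*s*w) ≤ -2.6202 := by nlinarith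
  have hYb : 2.3407 ≤ 2 + 2*2*s + -1*(3*s*s - w) := by nlinarith
  nlinarith [hXb, hYb, hwL,
    sq_nonneg ((-1 + 2*s + 2*(s*s - w) + -1*(s*s*s - 3*s*w)) + 2.6202),
    sq_nonneg ((2 + 2*2*s + -1*(3*s*s - w)) - 2.3407),
    mul_nonneg (by linarith : (0:ℝ) ≤ w - 0.663737) (sq_nonneg (2 + 2*2*s + -1*(3*s*s - w)))]

end

section
variable (θ : ℂ) (hsL : -0.07638 ≤ θ.re) (hsH : θ.re ≤ -0.076378)
  (hwL : 0.663737 ≤ θ.im * θ.im) (hwH : θ.im * θ.im ≤ 0.663747)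

include hsL hsH hwL hwH

lemma nsq_vA : 7.52 ≤ Complex.normSq ((-1:ℂ) - 3*θ + θ^3) := by
  have hv : ((-1:ℂ) - 3*θ + θ^3) = ((-1:ℝ):ℂ) + (-3:ℝ)*θ + (0:ℝ)*θ^2 + (1:ℝ)*θ^3 := by
    push_cast; ring
  rw [hv, nsq_vec]
  exact nsq_Ac θ.re (θ.im*θ.im) hsL hsH hwL hwH

lemma nsq_vA' : 7.52 ≤ Complex.normSq ((-1:ℂ) - 4*θ + θ^3) := by
  have hv : ((-1:ℂ) - 4*θ + θ^3) = ((-1:ℝ):ℂ) + (-4:ℝ)*θ + (0:ℝ)*θ^2 + (1:ℝ)*θ^3 := by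
    push_cast; ring
  rw [hv, nsq_vec]
  exact nsq_Ac' θ.re (θ.im*θ.im) hsL hsH hwL hwH

lemma nsq_vB : 7.52 ≤ Complex.normSq ((-1:ℂ) + θ + 2*θ^2 - θ^3) := by
  have hv : ((-1:ℂ) + θ + 2*θ^2 - θ^3) = ((-1:ℝ):ℂ) + (1:ℝ)*θ + (2:ℝ)*θ^2 + (-1:ℝ)*θ^3 := by
    push_cast; ring
  rw [hv, nsq_vec]
  exact nsq_Bc θ.re (θ.im*θ.im) hsL hsH hwL hwH

lemma nsq_vB' : 7.52 ≤ Complex.normSq ((-1:ℂ) + 2*θ + 2*θ^2 - θ^3) := by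
  have hv : ((-1:ℂ) + 2*θ + 2*θ^2 - θ^3) = ((-1:ℝ):ℂ) + (2:ℝ)*θ + (2:ℝ)*θ^2 + (-1:ℝ)*θ^3 := by
    push_cast; ring
  rw [hv, nsq_vec]
  exact nsq_Bc' θ.re (θ.im*θ.im) hsL hsH hwL hwH

end



def Cd : ℤ → ℤ := fun i => if i = 1 ∨ i = -1 ∨ i = -2 then 1 else 0

def QCf (θ : ℂ) : ℕ → ℂ := fun n =>
  if n % 4 = 0 then (-1 - 3*θ + θ^3)
  else if n % 4 = 1 then (-1 + θ + 2*θ^2 - θ^3)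
  else if n % 4 = 2 then -(-1 - 3*θ + θ^3)
  else -(-1 + θ + 2*θ^2 - θ^3)

def Gf (θ : ℂ) (ε δ : ℤ → ℕ) (j : ℕ) : ℂ :=
  (((ε ((j:ℤ)-2) : ℤ) - (δ ((j:ℤ)-2) : ℤ) - Cd ((j:ℤ)-2) : ℤ) : ℂ) * θ^j

section Core
variable (θ : ℂ) (hθ0 : θ ≠ 0) (hθ1 : ‖θ‖ < 1) (hroot : θ^4 = θ^3 + θ^2 + θ + 1)
  (hsL : -0.07638 ≤ θ.re) (hsH : θ.re ≤ -0.076378)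
  (hwL : 0.663737 ≤ θ.im * θ.im) (hwH : θ.im * θ.im ≤ 0.663747)

include hθ0 hθ1 hsL hsH hwL hwH

lemma kill_step (v : ℂ) (hv : 7.52 ≤ Complex.normSq v) (m : ℕ) (c : ℕ → ℤ)
    (hc : ∀ k, |c k| ≤ 1)
    (h : HasSum (fun k : ℕ => (c k : ℂ) * θ^k * θ^(m+7)) (v * θ^(m+5))) : False := by
  have hc2 : Complex.normSq θ ≤ 0.669581 := by
    have := (mono_bounds θ.re (θ.im*θ.im) hsL hsH hwL hwH).1.2
    rw [Complex.normSq_apply]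
    linarith
  have hW := tail_bound θ hθ1 hsL hsH hc2 c hc (θ^(m+7)) _ h
  rw [norm_mul, norm_pow, norm_pow] at hW
  have hp : 0 < ‖θ‖ := norm_pos_iff.2 hθ0
  have hppow : 0 < ‖θ‖^(m+5) := by positivity
  have hsplit : ‖θ‖^(m+7) = ‖θ‖^(m+5) * ‖θ‖^2 := by ring
  rw [hsplit] at hW
  have hθ2 : ‖θ‖^2 = Complex.normSq θ := Complex.sq_norm θ
  have hv2 : ‖v‖ ≤ 4.0858 * 0.669581 := by
    have h1 : ‖v‖ * ‖θ‖^(m+5) ≤ (4.0858 * ‖θ‖^2) * ‖θ‖^(m+5) := by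
      calc ‖v‖ * ‖θ‖^(m+5) ≤ 4.0858 * (‖θ‖^(m+5) * ‖θ‖^2) := hW
        _ = (4.0858 * ‖θ‖^2) * ‖θ‖^(m+5) := by ring
    have h2 : ‖v‖ ≤ 4.0858 * ‖θ‖^2 := le_of_mul_le_mul_right h1 hppow
    rw [hθ2] at h2
    nlinarith
  have hv3 : Complex.normSq v ≤ (4.0858 * 0.669581)^2 := by
    rw [← Complex.sq_norm]
    have habs : ‖v‖ = ‖v‖ := rfl
    rw [habs]
    nlinarith [norm_nonneg v]
  nlinarith

include hroot

lemma forced (ε δ : ℤ → ℕ) (hε1 : ∀ i, ε i ≤ 1) (hδ1 : ∀ i, δ i ≤ 1)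
    (hε0 : ∀ i, i < (4:ℤ) → ε i = 0) (hδ0 : ∀ i, i < (4:ℤ) → δ i = 0)
    (hG : HasSum (Gf θ ε δ) 0) :
    ∀ n : ℕ, ε ((n:ℤ)+4) = (if n % 4 = 1 ∨ n % 4 = 2 then 1 else 0) := by
  have key : ∀ n : ℕ, HasSum (fun k : ℕ => Gf θ ε δ (k+(n+6))) (QCf θ n * θ^(n+5)) →
      (ε ((n:ℤ)+4) = (if n % 4 = 1 ∨ n % 4 = 2 then 1 else 0) ∧
       δ ((n:ℤ)+4) = (if n % 4 = 0 ∨ n % 4 = 3 then 1 else 0)) ∧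
      HasSum (fun k : ℕ => Gf θ ε δ (k+(n+7))) (QCf θ (n+1) * θ^(n+6)) := by
    intro n hP
    have h1 : HasSum (fun k : ℕ => Gf θ ε δ (k+(n+7)))
        (QCf θ n * θ^(n+5) - Gf θ ε δ (n+6)) := by
      have h2 : HasSum (fun m : ℕ => Gf θ ε δ (m+1+(n+6)))
          (QCf θ n * θ^(n+5) - Gf θ ε δ (n+6)) := by
        apply (hasSum_nat_add_iff (f := fun k => Gf θ ε δ (k+(n+6))) 1).mpr
        rw [Finset.sum_range_one]
        have hval : QCf θ n * θ^(n+5) - Gf θ ε δ (n+6) + Gf θ ε δ (0+(n+6))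
            = QCf θ n * θ^(n+5) := by
          rw [Nat.zero_add]; ring
        rw [hval]
        exact hP
      have hfun : (fun m : ℕ => Gf θ ε δ (m+1+(n+6))) = fun m : ℕ => Gf θ ε δ (m+(n+7)) := by
        funext m; congr 1; omega
      rwa [hfun] at h2
    have hfun2 : (fun k : ℕ => Gf θ ε δ (k+(n+7))) = fun k : ℕ =>
        (((ε ((k:ℤ)+(n:ℤ)+5) : ℤ) - (δ ((k:ℤ)+(n:ℤ)+5) : ℤ) : ℤ) : ℂ) * θ^k * θ^(n+7) := by
      funext k
      unfold Gf
      have hidx : ((k+(n+7):ℕ):ℤ) - 2 = (k:ℤ)+(n:ℤ)+5 := by push_cast; ring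
      rw [hidx]
      have hCd : Cd ((k:ℤ)+(n:ℤ)+5) = 0 := by
        unfold Cd
        rw [if_neg (by omega)]
      rw [hCd, pow_add]
      push_cast
      ring
    rw [hfun2] at h1
    have hcb : ∀ k : ℕ, |((ε ((k:ℤ)+(n:ℤ)+5) : ℤ) - (δ ((k:ℤ)+(n:ℤ)+5) : ℤ))| ≤ 1 := by
      intro k
      have h1 := hε1 ((k:ℤ)+(n:ℤ)+5)
      have h2 := hδ1 ((k:ℤ)+(n:ℤ)+5)
      rw [abs_le]
      omega
    have hGn6 : Gf θ ε δ (n+6) = (((ε ((n:ℤ)+4) : ℤ) - (δ ((n:ℤ)+4) : ℤ) : ℤ) : ℂ) * θ^(n+6) := by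
      unfold Gf
      have hidx : ((n+6:ℕ):ℤ) - 2 = (n:ℤ)+4 := by push_cast; ring
      rw [hidx]
      have hCd : Cd ((n:ℤ)+4) = 0 := by unfold Cd; rw [if_neg (by omega)]
      rw [hCd]
      push_cast
      ring
    have hεc := Nat.le_one_iff_eq_zero_or_eq_one.1 (hε1 ((n:ℤ)+4))
    have hδc := Nat.le_one_iff_eq_zero_or_eq_one.1 (hδ1 ((n:ℤ)+4))
    have hnsA := nsq_vA θ hsL hsH hwL hwH
    have hnsA' := nsq_vA' θ hsL hsH hwL hwH
    have hnsB := nsq_vB θ hsL hsH hwL hwH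
    have hnsB' := nsq_vB' θ hsL hsH hwL hwH
    have hr4 : n % 4 = 0 ∨ n % 4 = 1 ∨ n % 4 = 2 ∨ n % 4 = 3 := by omega
    rcases hr4 with hr | hr | hr | hr
    · have hQ : QCf θ n = -1 - 3*θ + θ^3 := by simp [QCf, hr]
      have hQ1 : QCf θ (n+1) = -1 + θ + 2*θ^2 - θ^3 := by
        have h : (n+1) % 4 = 1 := by omega
        simp [QCf, h]
      rcases hεc with ha | ha <;> rcases hδc with hb | hb
      · exfalso
        refine kill_step θ hθ0 hθ1 hsL hsH hwL hwH (-1 - 3*θ + θ^3) hnsA n _ hcb ?_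
        convert h1 using 1
        rw [hGn6, hQ, ha, hb]; push_cast; ring
      · refine ⟨⟨by simp [hr, ha], by simp [hr, hb]⟩, ?_⟩
        have hval : QCf θ n * θ^(n+5) - Gf θ ε δ (n+6) = QCf θ (n+1) * θ^(n+6) := by
          rw [hGn6, hQ, hQ1, ha, hb]
          push_cast
          linear_combination θ^(n+5) * hroot
        rw [hfun2, ← hval]
        exact h1
      · exfalso
        refine kill_step θ hθ0 hθ1 hsL hsH hwL hwH (-1 - 4*θ + θ^3) hnsA' n _ hcb ?_
        convert h1 using 1
        rw [hGn6, hQ, ha, hb]; push_cast; ring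
      · exfalso
        refine kill_step θ hθ0 hθ1 hsL hsH hwL hwH (-1 - 3*θ + θ^3) hnsA n _ hcb ?_
        convert h1 using 1
        rw [hGn6, hQ, ha, hb]; push_cast; ring
    · have hQ : QCf θ n = -1 + θ + 2*θ^2 - θ^3 := by simp [QCf, hr]
      have hQ1 : QCf θ (n+1) = -(-1 - 3*θ + θ^3) := by
        have h : (n+1) % 4 = 2 := by omega
        simp [QCf, h]
      rcases hεc with ha | ha <;> rcases hδc with hb | hb
      · exfalso
        refine kill_step θ hθ0 hθ1 hsL hsH hwL hwH (-1 + θ + 2*θ^2 - θ^3) hnsB n _ hcb ?_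
        convert h1 using 1
        rw [hGn6, hQ, ha, hb]; push_cast; ring
      · exfalso
        refine kill_step θ hθ0 hθ1 hsL hsH hwL hwH (-1 + 2*θ + 2*θ^2 - θ^3) hnsB' n _ hcb ?_
        convert h1 using 1
        rw [hGn6, hQ, ha, hb]; push_cast; ring
      · refine ⟨⟨by simp [hr, ha], by simp [hr, hb]⟩, ?_⟩
        have hval : QCf θ n * θ^(n+5) - Gf θ ε δ (n+6) = QCf θ (n+1) * θ^(n+6) := by
          rw [hGn6, hQ, hQ1, ha, hb]
          push_cast
          linear_combination θ^(n+5) * hroot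
        rw [hfun2, ← hval]
        exact h1
      · exfalso
        refine kill_step θ hθ0 hθ1 hsL hsH hwL hwH (-1 + θ + 2*θ^2 - θ^3) hnsB n _ hcb ?_
        convert h1 using 1
        rw [hGn6, hQ, ha, hb]; push_cast; ring
    · have hQ : QCf θ n = -(-1 - 3*θ + θ^3) := by simp [QCf, hr]
      have hQ1 : QCf θ (n+1) = -(-1 + θ + 2*θ^2 - θ^3) := by
        have h : (n+1) % 4 = 3 := by omega
        simp [QCf, h]
      rcases hεc with ha | ha <;> rcases hδc with hb | hb
      · exfalso
        refine kill_step θ hθ0 hθ1 hsL hsH hwL hwH (-(-1 - 3*θ + θ^3))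
          (by rwa [Complex.normSq_neg]) n _ hcb ?_
        convert h1 using 1
        rw [hGn6, hQ, ha, hb]; push_cast; ring
      · exfalso
        refine kill_step θ hθ0 hθ1 hsL hsH hwL hwH (-(-1 - 4*θ + θ^3))
          (by rwa [Complex.normSq_neg]) n _ hcb ?_
        convert h1 using 1
        rw [hGn6, hQ, ha, hb]; push_cast; ring
      · refine ⟨⟨by simp [hr, ha], by simp [hr, hb]⟩, ?_⟩
        have hval : QCf θ n * θ^(n+5) - Gf θ ε δ (n+6) = QCf θ (n+1) * θ^(n+6) := by
          rw [hGn6, hQ, hQ1, ha, hb]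
          push_cast
          linear_combination (-(θ^(n+5))) * hroot
        rw [hfun2, ← hval]
        exact h1
      · exfalso
        refine kill_step θ hθ0 hθ1 hsL hsH hwL hwH (-(-1 - 3*θ + θ^3))
          (by rwa [Complex.normSq_neg]) n _ hcb ?_
        convert h1 using 1
        rw [hGn6, hQ, ha, hb]; push_cast; ring
    · have hQ : QCf θ n = -(-1 + θ + 2*θ^2 - θ^3) := by
        simp [QCf, hr]
      have hQ1 : QCf θ (n+1) = -1 - 3*θ + θ^3 := by
        have h : (n+1) % 4 = 0 := by omega
        simp [QCf, h]
      rcases hεc with ha | ha <;> rcases hδc with hb | hb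
      · exfalso
        refine kill_step θ hθ0 hθ1 hsL hsH hwL hwH (-(-1 + θ + 2*θ^2 - θ^3))
          (by rwa [Complex.normSq_neg]) n _ hcb ?_
        convert h1 using 1
        rw [hGn6, hQ, ha, hb]; push_cast; ring
      · refine ⟨⟨by simp [hr, ha], by simp [hr, hb]⟩, ?_⟩
        have hval : QCf θ n * θ^(n+5) - Gf θ ε δ (n+6) = QCf θ (n+1) * θ^(n+6) := by
          rw [hGn6, hQ, hQ1, ha, hb]
          push_cast
          linear_combination (-(θ^(n+5))) * hroot
        rw [hfun2, ← hval]
        exact h1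
      · exfalso
        refine kill_step θ hθ0 hθ1 hsL hsH hwL hwH (-(-1 + 2*θ + 2*θ^2 - θ^3))
          (by rwa [Complex.normSq_neg]) n _ hcb ?_
        convert h1 using 1
        rw [hGn6, hQ, ha, hb]; push_cast; ring
      · exfalso
        refine kill_step θ hθ0 hθ1 hsL hsH hwL hwH (-(-1 + θ + 2*θ^2 - θ^3))
          (by rwa [Complex.normSq_neg]) n _ hcb ?_
        convert h1 using 1
        rw [hGn6, hQ, ha, hb]; push_cast; ring
  have hP0 : HasSum (fun k : ℕ => Gf θ ε δ (k+6)) (QCf θ 0 * θ^5) := by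
    have hQ0 : QCf θ 0 = -1 - 3*θ + θ^3 := by simp [QCf]
    apply (hasSum_nat_add_iff (f := Gf θ ε δ) 6).mpr
    have e0 : Gf θ ε δ 0 = -1 := by
      unfold Gf
      norm_num
      rw [hε0 (-2) (by norm_num), hδ0 (-2) (by norm_num)]
      unfold Cd
      norm_num
    have e1 : Gf θ ε δ 1 = -θ := by
      unfold Gf
      norm_num
      rw [hε0 (-1) (by norm_num), hδ0 (-1) (by norm_num)]
      unfold Cd
      norm_num
    have e2 : Gf θ ε δ 2 = 0 := by
      unfold Gf
      norm_num
      rw [hε0 0 (by norm_num), hδ0 0 (by norm_num)]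
      unfold Cd
      norm_num
    have e3 : Gf θ ε δ 3 = -θ^3 := by
      unfold Gf
      norm_num
      rw [hε0 1 (by norm_num), hδ0 1 (by norm_num)]
      unfold Cd
      norm_num
    have e4 : Gf θ ε δ 4 = 0 := by
      unfold Gf
      norm_num
      rw [hε0 2 (by norm_num), hδ0 2 (by norm_num)]
      unfold Cd
      norm_num
    have e5 : Gf θ ε δ 5 = 0 := by
      unfold Gf
      norm_num
      rw [hε0 3 (by norm_num), hδ0 3 (by norm_num)]
      unfold Cd
      norm_num
    have hsum : (∑ i ∈ Finset.range 6, Gf θ ε δ i) = -1 - θ - θ^3 := by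
      rw [Finset.sum_range_succ, Finset.sum_range_succ, Finset.sum_range_succ,
        Finset.sum_range_succ, Finset.sum_range_succ, Finset.sum_range_one,
        e0, e1, e2, e3, e4, e5]
      ring
    rw [hsum, hQ0]
    have hval : (-1 - 3*θ + θ^3) * θ^5 + (-1 - θ - θ^3) = 0 := by
      linear_combination (1 - θ^2 + θ^3 + θ^4) * hroot
    rw [hval]
    exact hG
  have hAll : ∀ n : ℕ, HasSum (fun k : ℕ => Gf θ ε δ (k+(n+6))) (QCf θ n * θ^(n+5)) := by
    intro n
    induction n with
    | zero => exact hP0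
    | succ m ih => exact (key m ih).2
  intro n
  exact ((key n (hAll n)).1).1
end Core

lemma epsA_one : ∀ j : ℤ, epsA j = 1 → (4 ≤ j ∧ (j % 4 = 1 ∨ j % 4 = 2)) := by
  intro j hj
  by_contra hc
  unfold epsA at hj
  rw [if_neg hc] at hj
  exact absurd hj (by norm_num)

lemma epsB_one : ∀ j : ℤ, epsB j = 1 → (4 ≤ j ∧ (j % 4 = 0 ∨ j % 4 = 3)) := by
  intro j hj
  by_contra hc
  unfold epsB at hj
  rw [if_neg hc] at hj
  exact absurd hj (by norm_num)

lemma expansion_epsA : IsExpansion 4 epsA := by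
  refine ⟨fun i => ?_, fun i hi => ?_, fun i hc => ?_⟩
  · unfold epsA; split <;> omega
  · unfold epsA; rw [if_neg (by omega)]
  · obtain ⟨h1, h2, h3, h4⟩ := hc
    have a1 := epsA_one _ h1
    have a2 := epsA_one _ h2
    have a3 := epsA_one _ h3
    have a4 := epsA_one _ h4
    omega

lemma expansion_epsB : IsExpansion 4 epsB := by
  refine ⟨fun i => ?_, fun i hi => ?_, fun i hc => ?_⟩
  · unfold epsB; split <;> omega
  · unfold epsB; rw [if_neg (by omega)]
  · obtain ⟨h1, h2, h3, h4⟩ := hc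
    have a1 := epsB_one _ h1
    have a2 := epsB_one _ h2
    have a3 := epsB_one _ h3
    have a4 := epsB_one _ h4
    omega

lemma coordinate_id {𝕜 : Type*} [Field 𝕜] (γ : 𝕜) (h0 : γ ≠ 0) (h4 : 1 - γ^4 ≠ 0)
    (hroot : γ^4 = γ^3 + γ^2 + γ + 1) :
    (γ^4 + γ^7)/(1 - γ^4) + (γ^(-2:ℤ) + γ⁻¹ + γ) = (γ^5 + γ^6)/(1 - γ^4) := by
  have h2 : γ^(-2:ℤ) = (γ^2)⁻¹ := by
    rw [zpow_neg, ← zpow_natCast γ 2]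
    norm_num
  rw [h2]
  have hg2 : γ^2 ≠ 0 := pow_ne_zero _ h0
  field_simp
  linear_combination ((-1)*γ^0 + (1)*γ^2 + (-1)*γ^3 + (1)*γ^5) * hroot


set_option maxHeartbeats 1000000 in
theorem Eset_amm (β β₂ : ℝ) (β₃ : ℂ)
    (hβ : 1 < β) (hβroot : β ^ 4 = β ^ 3 + β ^ 2 + β + 1)
    (hβ₂neg : -1 < β₂) (hβ₂pos : β₂ < 0)
    (hβ₂root : β₂ ^ 4 = β₂ ^ 3 + β₂ ^ 2 + β₂ + 1)
    (hβ₃abs : ‖β₃‖ < 1) (hβ₃im : β₃.im ≠ 0)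
    (hβ₃root : β₃ ^ 4 = β₃ ^ 3 + β₃ ^ 2 + β₃ + 1)
    (α : ℝ × ℂ) (hα : α = (β₂, β₃)) :
    Eset α (α ^ (-2 : ℤ) + α⁻¹ + α) = {(α ^ 5 + α ^ 6) / (1 - α ^ 4)} := by
  subst hα
  have hβ₂0 : β₂ ≠ 0 := ne_of_lt hβ₂pos
  have hβ₂n : ‖β₂‖ < 1 := by rw [Real.norm_eq_abs, abs_lt]; constructor <;> linarith
  have hβ₃n : ‖β₃‖ < 1 := by exact hβ₃abs
  have hβ₃0 : β₃ ≠ 0 := by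
    intro h
    apply hβ₃im
    rw [h]
    rfl
  obtain ⟨⟨hsL, hsH⟩, hwL, hwH⟩ := theta_bounds β₃ hβ₃abs hβ₃im hβ₃root
  have h4β₂ : 1 - β₂^4 ≠ 0 := one_sub_pow_ne β₂ hβ₂n
  have h4β₃ : 1 - β₃^4 ≠ 0 := one_sub_pow_ne β₃ hβ₃n
  set u : ℝ × ℂ := ((β₂, β₃) : ℝ × ℂ) ^ (-2 : ℤ) + ((β₂, β₃) : ℝ × ℂ)⁻¹ + ((β₂, β₃) : ℝ × ℂ) with hu
  set pt : ℝ × ℂ := (((β₂, β₃) : ℝ × ℂ) ^ 5 + ((β₂, β₃) : ℝ × ℂ) ^ 6) / (1 - ((β₂, β₃) : ℝ × ℂ) ^ 4) with hptdef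
  have hpt_eq : pt = ((β₂^5+β₂^6)/(1-β₂^4), (β₃^5+β₃^6)/(1-β₃^4)) := rfl
  have hzsum : HasSum (fun i : ℤ => (epsA i : ℝ × ℂ) * ((β₂, β₃) : ℝ × ℂ) ^ i) pt := by
    rw [hpt_eq]
    exact (hasSum_epsA β₂ hβ₂n).prodMk (hasSum_epsA β₃ hβ₃n)
  set w₀ : ℝ × ℂ := ((β₂^4+β₂^7)/(1-β₂^4), (β₃^4+β₃^7)/(1-β₃^4)) with hw₀
  have hwsum : HasSum (fun i : ℤ => (epsB i : ℝ × ℂ) * ((β₂, β₃) : ℝ × ℂ) ^ i) w₀ :=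
    (hasSum_epsB β₂ hβ₂n).prodMk (hasSum_epsB β₃ hβ₃n)
  have hadd : w₀ + u = pt := by
    rw [hpt_eq]
    have h1 : (w₀ + u).1 = (β₂^5+β₂^6)/(1-β₂^4) :=
      coordinate_id β₂ hβ₂0 h4β₂ hβ₂root
    have h2 : (w₀ + u).2 = (β₃^5+β₃^6)/(1-β₃^4) :=
      coordinate_id β₃ hβ₃0 h4β₃ hβ₃root
    exact Prod.ext h1 h2
  apply Set.eq_singleton_iff_unique_mem.mpr
  constructor
  · constructor
    · exact ⟨epsA, expansion_epsA, hzsum⟩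
    · exact ⟨w₀, ⟨epsB, expansion_epsB, hwsum⟩, hadd⟩
  · intro z hz
    obtain ⟨⟨ε, hex, hsum⟩, hz2⟩ := hz
    obtain ⟨w, ⟨δ, hdx, hsumw⟩, hwz⟩ := hz2
    have h2ε : HasSum (fun i : ℤ => (ε i : ℂ) * β₃ ^ i) z.2 :=
      hsum.map (AddMonoidHom.snd ℝ ℂ) continuous_snd
    have h2δ' : HasSum (fun i : ℤ => (δ i : ℂ) * β₃ ^ i) w.2 :=
      hsumw.map (AddMonoidHom.snd ℝ ℂ) continuous_snd
    have hw2 : w.2 = z.2 - u.2 := by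
      have h := congrArg Prod.snd hwz
      rw [Prod.snd_add] at h
      linear_combination h
    rw [hw2] at h2δ'
    -- the u-digit sum
    have hC : HasSum (fun i : ℤ => (Cd i : ℂ) * β₃ ^ i) u.2 := by
      have h1 := hasSum_ite_eq (1:ℤ) (β₃^(1:ℤ))
      have h2 := hasSum_ite_eq (-1:ℤ) (β₃^(-1:ℤ))
      have h3 := hasSum_ite_eq (-2:ℤ) (β₃^(-2:ℤ))
      have h := h1.add (h2.add h3)
      have hval : β₃^(1:ℤ) + (β₃^(-1:ℤ) + β₃^(-2:ℤ)) = u.2 := by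
        have hu2 : u.2 = β₃^(-2:ℤ) + β₃⁻¹ + β₃ := rfl
        rw [hu2, zpow_one, zpow_neg_one]
        ring
      rw [hval] at h
      convert h using 1
      funext i
      unfold Cd
      by_cases e1 : i = 1
      · subst e1; norm_num
      · by_cases e2 : i = -1
        · subst e2; norm_num
        · by_cases e3 : i = -2
          · subst e3; norm_num
          · rw [if_neg (by tauto), if_neg e1, if_neg e2, if_neg e3]
            norm_num
    have hdiff : HasSum (fun i : ℤ => (((ε i : ℤ) - (δ i : ℤ) - Cd i : ℤ) : ℂ) * β₃ ^ i) 0 := by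
      have h0 := (h2ε.sub h2δ').sub hC
      have hfe : (fun i : ℤ => (((ε i : ℤ) - (δ i : ℤ) - Cd i : ℤ) : ℂ) * β₃ ^ i)
          = fun i : ℤ => ((ε i : ℂ) * β₃ ^ i - (δ i : ℂ) * β₃ ^ i) - (Cd i : ℂ) * β₃ ^ i := by
        funext i
        push_cast
        ring
      rw [hfe]
      have hval : z.2 - (z.2 - u.2) - u.2 = 0 := by ring
      rw [hval] at h0
      exact h0
    have hGsum : HasSum (Gf β₃ ε δ) 0 := by
      have hvan : ∀ i : ℤ, i < -2 →
          (((ε i : ℤ) - (δ i : ℤ) - Cd i : ℤ) : ℂ) * β₃ ^ i = 0 := by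
        intro i hi
        rw [hex.2.1 i (by omega), hdx.2.1 i (by omega)]
        unfold Cd
        rw [if_neg (by omega)]
        norm_num
      have hN := (hasSum_int_shift (-2) _ hvan).mpr hdiff
      have hM := hN.mul_left (β₃^2)
      have hfe : (fun j : ℕ => β₃^2 *
          ((((ε (-2+(j:ℤ)) : ℤ) - (δ (-2+(j:ℤ)) : ℤ) - Cd (-2+(j:ℤ)) : ℤ) : ℂ) * β₃ ^ ((-2:ℤ)+(j:ℤ))))
          = Gf β₃ ε δ := by
        funext j
        unfold Gf
        have hidx : (-2:ℤ) + (j:ℤ) = (j:ℤ) - 2 := by ring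
        rw [hidx]
        have hp : β₃^(2:ℕ) * β₃^((j:ℤ)-2) = β₃^(j:ℕ) := by
          rw [← zpow_natCast β₃ 2, ← zpow_add₀ hβ₃0, ← zpow_natCast β₃ j]
          congr 1
          push_cast
          ring
        rw [← hp]
        ring
      rw [hfe] at hM
      simpa using hM
    have happly := forced β₃ hβ₃0 hβ₃n hβ₃root hsL hsH hwL hwH ε δ
      hex.1 hdx.1 hex.2.1 hdx.2.1 hGsum
    have hεeq : ∀ i : ℤ, ε i = epsA i := by
      intro i
      by_cases h4 : 4 ≤ i
      · set n : ℕ := (i - 4).toNat with hn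
        have hni : (n:ℤ) + 4 = i := by omega
        have h := happly n
        rw [hni] at h
        rw [h]
        unfold epsA
        by_cases hc : n % 4 = 1 ∨ n % 4 = 2
        · rw [if_pos hc, if_pos ⟨h4, by omega⟩]
        · rw [if_neg hc, if_neg (by omega)]
      · rw [hex.2.1 i (by omega)]
        unfold epsA
        rw [if_neg (by omega)]
    have hfun : (fun i : ℤ => (ε i : ℝ × ℂ) * ((β₂, β₃) : ℝ × ℂ) ^ i)
        = fun i : ℤ => (epsA i : ℝ × ℂ) * ((β₂, β₃) : ℝ × ℂ) ^ i := by
      funext i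
      rw [hεeq i]
    have hz_sum : HasSum (fun i : ℤ => (epsA i : ℝ × ℂ) * ((β₂, β₃) : ℝ × ℂ) ^ i) z := by
      have h : HasSum (fun i : ℤ => (ε i : ℝ × ℂ) * ((β₂, β₃) : ℝ × ℂ) ^ i) z := hsum
      rwa [hfun] at h
    exact hz_sum.unique hzsum
end
end
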